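/- For every natural number d ≥ 3, there is no function f from the unit vectors of the d-dimensional real Euclidean space to {0,1} such that (i) f(x) = f(y) whenever x and y span the same one-dimensional subspace (i.e., y = c·x for some scalar c), and (ii) for every orthonormal basis e₁, …, e_d of the space, exactly one of f(e₁), …, f(e_d) equals 1 (i.e., Σ_i f(e_i) = 1). -/

import Mathlib

noncomputable def ksEmb {d : ℕ} (a b c : Fin d) (p : Fin 3 → ℝ) : EuclideanSpace ℝ (Fin d) :=
  (Real.sqrt (p 0 * p 0 + p 1 * p 1 + p 2 * p 2))⁻¹ •
    (p 0 • EuclideanSpace.single a 1 + p 1 • EuclideanSpace.single b 1 +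
      p 2 • EuclideanSpace.single c 1)

lemma ks_inner_emb {d : ℕ} {a b c : Fin d} (hab : a ≠ b) (hac : a ≠ c) (hbc : b ≠ c)
    (p q : Fin 3 → ℝ) :
    (inner ℝ (ksEmb a b c p) (ksEmb a b c q) : ℝ) =
      (Real.sqrt (p 0 * p 0 + p 1 * p 1 + p 2 * p 2))⁻¹ *
      ((Real.sqrt (q 0 * q 0 + q 1 * q 1 + q 2 * q 2))⁻¹ *
      (p 0 * q 0 + p 1 * q 1 + p 2 * q 2)) := by
  simp only [ksEmb, real_inner_smul_left, real_inner_smul_right, inner_add_left,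
    inner_add_right, EuclideanSpace.inner_single_left, EuclideanSpace.single_apply,
    RCLike.star_def, conj_trivial]
  simp only [hab, hac, hbc, hab.symm, hac.symm, hbc.symm, if_neg, if_pos, ite_true,
    reduceIte, mul_one, mul_zero, add_zero, zero_add]
  ring

lemma ks_inner_emb_single {d : ℕ} (a b c : Fin d) (p : Fin 3 → ℝ) (i : Fin d)
    (hia : a ≠ i) (hib : b ≠ i) (hic : c ≠ i) :
    (inner ℝ (ksEmb a b c p) (EuclideanSpace.single i (1:ℝ)) : ℝ) = 0 := by
  simp only [ksEmb, real_inner_smul_left, inner_add_left,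
    EuclideanSpace.inner_single_left, EuclideanSpace.single_apply,
    RCLike.star_def, conj_trivial]
  simp [hia, hib, hic]

set_option maxHeartbeats 2000000 in
lemma ks_triad {d : ℕ} (f : EuclideanSpace ℝ (Fin d) → ℕ)
    (hbasis : ∀ b : OrthonormalBasis (Fin d) ℝ (EuclideanSpace ℝ (Fin d)), ∑ i, f (b i) = 1)
    (a b c : Fin d) (hab : a ≠ b) (hac : a ≠ c) (hbc : b ≠ c)
    (h0 : ∀ i : Fin d, i ≠ a → i ≠ b → i ≠ c → f (EuclideanSpace.single i (1:ℝ)) = 0)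
    (p q r : Fin 3 → ℝ)
    (hp : 0 < p 0 * p 0 + p 1 * p 1 + p 2 * p 2)
    (hq : 0 < q 0 * q 0 + q 1 * q 1 + q 2 * q 2)
    (hr : 0 < r 0 * r 0 + r 1 * r 1 + r 2 * r 2)
    (hpq : p 0 * q 0 + p 1 * q 1 + p 2 * q 2 = 0)
    (hpr : p 0 * r 0 + p 1 * r 1 + p 2 * r 2 = 0)
    (hqr : q 0 * r 0 + q 1 * r 1 + q 2 * r 2 = 0) :
    f (ksEmb a b c p) + f (ksEmb a b c q) + f (ksEmb a b c r) = 1 := by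
  classical
  have hne : Nonempty (Fin d) := ⟨a⟩
  have hunit : ∀ s : Fin 3 → ℝ, 0 < s 0 * s 0 + s 1 * s 1 + s 2 * s 2 →
      (inner ℝ (ksEmb a b c s) (ksEmb a b c s) : ℝ) = 1 := fun s hs => by
    rw [ks_inner_emb hab hac hbc, ← mul_assoc, ← mul_inv, Real.mul_self_sqrt hs.le,
      inv_mul_cancel₀ hs.ne']
  have horth : ∀ (s t : Fin 3 → ℝ), s 0 * t 0 + s 1 * t 1 + s 2 * t 2 = 0 →
      (inner ℝ (ksEmb a b c s) (ksEmb a b c t) : ℝ) = 0 := fun s t hst => by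
    rw [ks_inner_emb hab hac hbc, hst, mul_zero, mul_zero]
  have hsingle : ∀ (k l : Fin d),
      (inner ℝ (EuclideanSpace.single k (1:ℝ)) (EuclideanSpace.single l (1:ℝ)) : ℝ) =
        if k = l then 1 else 0 := fun k l => by
    simp [EuclideanSpace.inner_single_left, EuclideanSpace.single_apply, eq_comm]
  let V : Fin d → EuclideanSpace ℝ (Fin d) := fun i =>
    if i = a then ksEmb a b c p else if i = b then ksEmb a b c q
      else if i = c then ksEmb a b c r else EuclideanSpace.single i 1
  have hVa : V a = ksEmb a b c p := by simp [V]
  have hVb : V b = ksEmb a b c q := by simp [V, hab.symm]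
  have hVc : V c = ksEmb a b c r := by simp [V, hac.symm, hbc.symm]
  have hVd : ∀ i, i ≠ a → i ≠ b → i ≠ c → V i = EuclideanSpace.single i 1 := by
    intro i h1 h2 h3; simp [V, h1, h2, h3]
  have honb : Orthonormal ℝ V := by
    rw [orthonormal_iff_ite]
    intro i j
    rcases eq_or_ne i a with h1 | hia
    · rw [h1]
      rcases eq_or_ne j a with h2 | hja
      · rw [h2, hVa, if_pos rfl]; exact hunit p hp
      rcases eq_or_ne j b with h2 | hjb
      · rw [h2, hVa, hVb, if_neg hab]; exact horth p q hpq
      rcases eq_or_ne j c with h2 | hjc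
      · rw [h2, hVa, hVc, if_neg hac]; exact horth p r hpr
      · rw [hVa, hVd j hja hjb hjc, if_neg hja.symm]
        exact ks_inner_emb_single a b c p j hja.symm hjb.symm hjc.symm
    rcases eq_or_ne i b with h1 | hib
    · rw [h1]
      rcases eq_or_ne j a with h2 | hja
      · rw [h2, hVb, hVa, if_neg hab.symm, real_inner_comm]; exact horth p q hpq
      rcases eq_or_ne j b with h2 | hjb
      · rw [h2, hVb, if_pos rfl]; exact hunit q hq
      rcases eq_or_ne j c with h2 | hjc
      · rw [h2, hVb, hVc, if_neg hbc]; exact horth q r hqr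
      · rw [hVb, hVd j hja hjb hjc, if_neg hjb.symm]
        exact ks_inner_emb_single a b c q j hja.symm hjb.symm hjc.symm
    rcases eq_or_ne i c with h1 | hic
    · rw [h1]
      rcases eq_or_ne j a with h2 | hja
      · rw [h2, hVc, hVa, if_neg hac.symm, real_inner_comm]; exact horth p r hpr
      rcases eq_or_ne j b with h2 | hjb
      · rw [h2, hVc, hVb, if_neg hbc.symm, real_inner_comm]; exact horth q r hqr
      rcases eq_or_ne j c with h2 | hjc
      · rw [h2, hVc, if_pos rfl]; exact hunit r hr
      · rw [hVc, hVd j hja hjb hjc, if_neg hjc.symm]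
        exact ks_inner_emb_single a b c r j hja.symm hjb.symm hjc.symm
    · rw [hVd i hia hib hic]
      rcases eq_or_ne j a with h2 | hja
      · rw [h2, hVa, if_neg hia, real_inner_comm]
        exact ks_inner_emb_single a b c p i hia.symm hib.symm hic.symm
      rcases eq_or_ne j b with h2 | hjb
      · rw [h2, hVb, if_neg hib, real_inner_comm]
        exact ks_inner_emb_single a b c q i hia.symm hib.symm hic.symm
      rcases eq_or_ne j c with h2 | hjc
      · rw [h2, hVc, if_neg hic, real_inner_comm]
        exact ks_inner_emb_single a b c r i hia.symm hib.symm hic.symm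
      · rw [hVd j hja hjb hjc]; exact hsingle i j
  have hcard : Fintype.card (Fin d) = Module.finrank ℝ (EuclideanSpace ℝ (Fin d)) := by
    simp
  let B0 : Module.Basis (Fin d) ℝ (EuclideanSpace ℝ (Fin d)) :=
    basisOfLinearIndependentOfCardEqFinrank honb.linearIndependent hcard
  have hB0 : ⇑B0 = V := coe_basisOfLinearIndependentOfCardEqFinrank _ _
  have honb' : Orthonormal ℝ B0 := by rw [hB0]; exact honb
  let B : OrthonormalBasis (Fin d) ℝ (EuclideanSpace ℝ (Fin d)) := B0.toOrthonormalBasis honb'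
  have hBV : ∀ i, B i = V i := by
    intro i
    show (B0.toOrthonormalBasis honb') i = V i
    rw [Module.Basis.coe_toOrthonormalBasis, hB0]
  have hsum' : ∑ i, f (V i) = 1 := by
    rw [← hbasis B]; exact Finset.sum_congr rfl fun i _ => by rw [hBV]
  have habc : ({a, b, c} : Finset (Fin d)).sum (fun i => f (V i)) = ∑ i, f (V i) := by
    apply Finset.sum_subset (Finset.subset_univ _)
    intro i _ hi
    simp only [Finset.mem_insert, Finset.mem_singleton, not_or] at hi
    obtain ⟨h1, h2, h3⟩ := hi
    rw [hVd i h1 h2 h3]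
    exact h0 i h1 h2 h3
  have hset : ({a, b, c} : Finset (Fin d)).sum (fun i => f (V i)) =
      f (V a) + f (V b) + f (V c) := by
    rw [Finset.sum_insert (by simp [hab, hac]), Finset.sum_insert (by simp [hbc]),
      Finset.sum_singleton, add_assoc]
  rw [hVa, hVb, hVc] at hset
  omega
noncomputable section KSvectors
def ksV0 : Fin 3 → ℝ := ![(0 : ℝ), (0 : ℝ), (1 : ℝ)]
def ksV1 : Fin 3 → ℝ := ![(0 : ℝ), (1 : ℝ), (0 : ℝ)]
def ksV2 : Fin 3 → ℝ := ![(0 : ℝ), (1 : ℝ), (1 : ℝ)]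
def ksV3 : Fin 3 → ℝ := ![(0 : ℝ), (1 : ℝ), (-1 : ℝ)]
def ksV4 : Fin 3 → ℝ := ![(0 : ℝ), (1 : ℝ), Real.sqrt 2]
def ksV5 : Fin 3 → ℝ := ![(0 : ℝ), (1 : ℝ), (-Real.sqrt 2)]
def ksV6 : Fin 3 → ℝ := ![(0 : ℝ), Real.sqrt 2, (1 : ℝ)]
def ksV7 : Fin 3 → ℝ := ![(0 : ℝ), Real.sqrt 2, (-1 : ℝ)]
def ksV8 : Fin 3 → ℝ := ![(1 : ℝ), (0 : ℝ), (0 : ℝ)]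
def ksV9 : Fin 3 → ℝ := ![(1 : ℝ), (0 : ℝ), (1 : ℝ)]
def ksV10 : Fin 3 → ℝ := ![(1 : ℝ), (0 : ℝ), (-1 : ℝ)]
def ksV11 : Fin 3 → ℝ := ![(1 : ℝ), (0 : ℝ), Real.sqrt 2]
def ksV12 : Fin 3 → ℝ := ![(1 : ℝ), (0 : ℝ), (-Real.sqrt 2)]
def ksV13 : Fin 3 → ℝ := ![(1 : ℝ), (1 : ℝ), (0 : ℝ)]
def ksV16 : Fin 3 → ℝ := ![(1 : ℝ), (1 : ℝ), Real.sqrt 2]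
def ksV17 : Fin 3 → ℝ := ![(1 : ℝ), (1 : ℝ), (-Real.sqrt 2)]
def ksV18 : Fin 3 → ℝ := ![(1 : ℝ), (-1 : ℝ), (0 : ℝ)]
def ksV21 : Fin 3 → ℝ := ![(1 : ℝ), (-1 : ℝ), Real.sqrt 2]
def ksV22 : Fin 3 → ℝ := ![(1 : ℝ), (-1 : ℝ), (-Real.sqrt 2)]
def ksV23 : Fin 3 → ℝ := ![(1 : ℝ), Real.sqrt 2, (0 : ℝ)]
def ksV24 : Fin 3 → ℝ := ![(1 : ℝ), Real.sqrt 2, (1 : ℝ)]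
def ksV25 : Fin 3 → ℝ := ![(1 : ℝ), Real.sqrt 2, (-1 : ℝ)]
def ksV28 : Fin 3 → ℝ := ![(1 : ℝ), (-Real.sqrt 2), (0 : ℝ)]
def ksV29 : Fin 3 → ℝ := ![(1 : ℝ), (-Real.sqrt 2), (1 : ℝ)]
def ksV30 : Fin 3 → ℝ := ![(1 : ℝ), (-Real.sqrt 2), (-1 : ℝ)]
def ksV33 : Fin 3 → ℝ := ![Real.sqrt 2, (0 : ℝ), (1 : ℝ)]
def ksV34 : Fin 3 → ℝ := ![Real.sqrt 2, (0 : ℝ), (-1 : ℝ)]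
def ksV35 : Fin 3 → ℝ := ![Real.sqrt 2, (1 : ℝ), (0 : ℝ)]
def ksV36 : Fin 3 → ℝ := ![Real.sqrt 2, (1 : ℝ), (1 : ℝ)]
def ksV37 : Fin 3 → ℝ := ![Real.sqrt 2, (1 : ℝ), (-1 : ℝ)]
def ksV40 : Fin 3 → ℝ := ![Real.sqrt 2, (-1 : ℝ), (0 : ℝ)]
def ksV41 : Fin 3 → ℝ := ![Real.sqrt 2, (-1 : ℝ), (1 : ℝ)]
def ksV42 : Fin 3 → ℝ := ![Real.sqrt 2, (-1 : ℝ), (-1 : ℝ)]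
def ksV57 : Fin 3 → ℝ := ![(-3 : ℝ), Real.sqrt 2, (-1 : ℝ)]
def ksV58 : Fin 3 → ℝ := ![(3 : ℝ), Real.sqrt 2, (-1 : ℝ)]
def ksV61 : Fin 3 → ℝ := ![(3 : ℝ), (-Real.sqrt 2), (-1 : ℝ)]
def ksV62 : Fin 3 → ℝ := ![(-3 : ℝ), (-Real.sqrt 2), (-1 : ℝ)]
def ksV65 : Fin 3 → ℝ := ![(-3 : ℝ), (1 : ℝ), (-Real.sqrt 2)]
def ksV66 : Fin 3 → ℝ := ![(3 : ℝ), (1 : ℝ), (-Real.sqrt 2)]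
def ksV69 : Fin 3 → ℝ := ![(3 : ℝ), (-1 : ℝ), (-Real.sqrt 2)]
def ksV70 : Fin 3 → ℝ := ![(-3 : ℝ), (-1 : ℝ), (-Real.sqrt 2)]
def ksV81 : Fin 3 → ℝ := ![(-Real.sqrt 2), (3 : ℝ), (1 : ℝ)]
def ksV82 : Fin 3 → ℝ := ![Real.sqrt 2, (3 : ℝ), (-1 : ℝ)]
def ksV85 : Fin 3 → ℝ := ![Real.sqrt 2, (-3 : ℝ), (1 : ℝ)]
def ksV86 : Fin 3 → ℝ := ![(-Real.sqrt 2), (-3 : ℝ), (-1 : ℝ)]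
def ksV95 : Fin 3 → ℝ := ![(-1 : ℝ), (3 : ℝ), (-Real.sqrt 2)]
def ksV96 : Fin 3 → ℝ := ![(1 : ℝ), (-3 : ℝ), (-Real.sqrt 2)]
def ksV99 : Fin 3 → ℝ := ![(1 : ℝ), (3 : ℝ), Real.sqrt 2]
def ksV100 : Fin 3 → ℝ := ![(-1 : ℝ), (-3 : ℝ), Real.sqrt 2]
def ksV101 : Fin 3 → ℝ := ![Real.sqrt 2, (-1 : ℝ), (-3 : ℝ)]
def ksV102 : Fin 3 → ℝ := ![(-Real.sqrt 2), (1 : ℝ), (-3 : ℝ)]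
def ksV105 : Fin 3 → ℝ := ![(1 : ℝ), Real.sqrt 2, (-3 : ℝ)]
def ksV106 : Fin 3 → ℝ := ![(-1 : ℝ), (-Real.sqrt 2), (-3 : ℝ)]
def ksV111 : Fin 3 → ℝ := ![(-Real.sqrt 2), (-1 : ℝ), (3 : ℝ)]
def ksV112 : Fin 3 → ℝ := ![Real.sqrt 2, (1 : ℝ), (3 : ℝ)]
def ksV115 : Fin 3 → ℝ := ![(-1 : ℝ), Real.sqrt 2, (3 : ℝ)]
def ksV116 : Fin 3 → ℝ := ![(1 : ℝ), (-Real.sqrt 2), (3 : ℝ)]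

private lemma ks_s2 : Real.sqrt 2 * Real.sqrt 2 = 2 := Real.mul_self_sqrt (by norm_num)

lemma ksV0_pos : (0:ℝ) < ksV0 0 * ksV0 0 + ksV0 1 * ksV0 1 + ksV0 2 * ksV0 2 := by
  simp only [show ksV0 0 = (0 : ℝ) from rfl, show ksV0 1 = (0 : ℝ) from rfl, show ksV0 2 = (1 : ℝ) from rfl]
  nlinarith [ks_s2]
lemma ksV1_pos : (0:ℝ) < ksV1 0 * ksV1 0 + ksV1 1 * ksV1 1 + ksV1 2 * ksV1 2 := by
  simp only [show ksV1 0 = (0 : ℝ) from rfl, show ksV1 1 = (1 : ℝ) from rfl, show ksV1 2 = (0 : ℝ) from rfl]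
  nlinarith [ks_s2]
lemma ksV2_pos : (0:ℝ) < ksV2 0 * ksV2 0 + ksV2 1 * ksV2 1 + ksV2 2 * ksV2 2 := by
  simp only [show ksV2 0 = (0 : ℝ) from rfl, show ksV2 1 = (1 : ℝ) from rfl, show ksV2 2 = (1 : ℝ) from rfl]
  nlinarith [ks_s2]
lemma ksV3_pos : (0:ℝ) < ksV3 0 * ksV3 0 + ksV3 1 * ksV3 1 + ksV3 2 * ksV3 2 := by
  simp only [show ksV3 0 = (0 : ℝ) from rfl, show ksV3 1 = (1 : ℝ) from rfl, show ksV3 2 = (-1 : ℝ) from rfl]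
  nlinarith [ks_s2]
lemma ksV4_pos : (0:ℝ) < ksV4 0 * ksV4 0 + ksV4 1 * ksV4 1 + ksV4 2 * ksV4 2 := by
  simp only [show ksV4 0 = (0 : ℝ) from rfl, show ksV4 1 = (1 : ℝ) from rfl, show ksV4 2 = Real.sqrt 2 from rfl]
  nlinarith [ks_s2]
lemma ksV5_pos : (0:ℝ) < ksV5 0 * ksV5 0 + ksV5 1 * ksV5 1 + ksV5 2 * ksV5 2 := by
  simp only [show ksV5 0 = (0 : ℝ) from rfl, show ksV5 1 = (1 : ℝ) from rfl, show ksV5 2 = (-Real.sqrt 2) from rfl]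
  nlinarith [ks_s2]
lemma ksV6_pos : (0:ℝ) < ksV6 0 * ksV6 0 + ksV6 1 * ksV6 1 + ksV6 2 * ksV6 2 := by
  simp only [show ksV6 0 = (0 : ℝ) from rfl, show ksV6 1 = Real.sqrt 2 from rfl, show ksV6 2 = (1 : ℝ) from rfl]
  nlinarith [ks_s2]
lemma ksV7_pos : (0:ℝ) < ksV7 0 * ksV7 0 + ksV7 1 * ksV7 1 + ksV7 2 * ksV7 2 := by
  simp only [show ksV7 0 = (0 : ℝ) from rfl, show ksV7 1 = Real.sqrt 2 from rfl, show ksV7 2 = (-1 : ℝ) from rfl]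
  nlinarith [ks_s2]
lemma ksV8_pos : (0:ℝ) < ksV8 0 * ksV8 0 + ksV8 1 * ksV8 1 + ksV8 2 * ksV8 2 := by
  simp only [show ksV8 0 = (1 : ℝ) from rfl, show ksV8 1 = (0 : ℝ) from rfl, show ksV8 2 = (0 : ℝ) from rfl]
  nlinarith [ks_s2]
lemma ksV9_pos : (0:ℝ) < ksV9 0 * ksV9 0 + ksV9 1 * ksV9 1 + ksV9 2 * ksV9 2 := by
  simp only [show ksV9 0 = (1 : ℝ) from rfl, show ksV9 1 = (0 : ℝ) from rfl, show ksV9 2 = (1 : ℝ) from rfl]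
  nlinarith [ks_s2]
lemma ksV10_pos : (0:ℝ) < ksV10 0 * ksV10 0 + ksV10 1 * ksV10 1 + ksV10 2 * ksV10 2 := by
  simp only [show ksV10 0 = (1 : ℝ) from rfl, show ksV10 1 = (0 : ℝ) from rfl, show ksV10 2 = (-1 : ℝ) from rfl]
  nlinarith [ks_s2]
lemma ksV11_pos : (0:ℝ) < ksV11 0 * ksV11 0 + ksV11 1 * ksV11 1 + ksV11 2 * ksV11 2 := by
  simp only [show ksV11 0 = (1 : ℝ) from rfl, show ksV11 1 = (0 : ℝ) from rfl, show ksV11 2 = Real.sqrt 2 from rfl]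
  nlinarith [ks_s2]
lemma ksV12_pos : (0:ℝ) < ksV12 0 * ksV12 0 + ksV12 1 * ksV12 1 + ksV12 2 * ksV12 2 := by
  simp only [show ksV12 0 = (1 : ℝ) from rfl, show ksV12 1 = (0 : ℝ) from rfl, show ksV12 2 = (-Real.sqrt 2) from rfl]
  nlinarith [ks_s2]
lemma ksV13_pos : (0:ℝ) < ksV13 0 * ksV13 0 + ksV13 1 * ksV13 1 + ksV13 2 * ksV13 2 := by
  simp only [show ksV13 0 = (1 : ℝ) from rfl, show ksV13 1 = (1 : ℝ) from rfl, show ksV13 2 = (0 : ℝ) from rfl]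
  nlinarith [ks_s2]
lemma ksV16_pos : (0:ℝ) < ksV16 0 * ksV16 0 + ksV16 1 * ksV16 1 + ksV16 2 * ksV16 2 := by
  simp only [show ksV16 0 = (1 : ℝ) from rfl, show ksV16 1 = (1 : ℝ) from rfl, show ksV16 2 = Real.sqrt 2 from rfl]
  nlinarith [ks_s2]
lemma ksV17_pos : (0:ℝ) < ksV17 0 * ksV17 0 + ksV17 1 * ksV17 1 + ksV17 2 * ksV17 2 := by
  simp only [show ksV17 0 = (1 : ℝ) from rfl, show ksV17 1 = (1 : ℝ) from rfl, show ksV17 2 = (-Real.sqrt 2) from rfl]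
  nlinarith [ks_s2]
lemma ksV18_pos : (0:ℝ) < ksV18 0 * ksV18 0 + ksV18 1 * ksV18 1 + ksV18 2 * ksV18 2 := by
  simp only [show ksV18 0 = (1 : ℝ) from rfl, show ksV18 1 = (-1 : ℝ) from rfl, show ksV18 2 = (0 : ℝ) from rfl]
  nlinarith [ks_s2]
lemma ksV21_pos : (0:ℝ) < ksV21 0 * ksV21 0 + ksV21 1 * ksV21 1 + ksV21 2 * ksV21 2 := by
  simp only [show ksV21 0 = (1 : ℝ) from rfl, show ksV21 1 = (-1 : ℝ) from rfl, show ksV21 2 = Real.sqrt 2 from rfl]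
  nlinarith [ks_s2]
lemma ksV22_pos : (0:ℝ) < ksV22 0 * ksV22 0 + ksV22 1 * ksV22 1 + ksV22 2 * ksV22 2 := by
  simp only [show ksV22 0 = (1 : ℝ) from rfl, show ksV22 1 = (-1 : ℝ) from rfl, show ksV22 2 = (-Real.sqrt 2) from rfl]
  nlinarith [ks_s2]
lemma ksV23_pos : (0:ℝ) < ksV23 0 * ksV23 0 + ksV23 1 * ksV23 1 + ksV23 2 * ksV23 2 := by
  simp only [show ksV23 0 = (1 : ℝ) from rfl, show ksV23 1 = Real.sqrt 2 from rfl, show ksV23 2 = (0 : ℝ) from rfl]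
  nlinarith [ks_s2]
lemma ksV24_pos : (0:ℝ) < ksV24 0 * ksV24 0 + ksV24 1 * ksV24 1 + ksV24 2 * ksV24 2 := by
  simp only [show ksV24 0 = (1 : ℝ) from rfl, show ksV24 1 = Real.sqrt 2 from rfl, show ksV24 2 = (1 : ℝ) from rfl]
  nlinarith [ks_s2]
lemma ksV25_pos : (0:ℝ) < ksV25 0 * ksV25 0 + ksV25 1 * ksV25 1 + ksV25 2 * ksV25 2 := by
  simp only [show ksV25 0 = (1 : ℝ) from rfl, show ksV25 1 = Real.sqrt 2 from rfl, show ksV25 2 = (-1 : ℝ) from rfl]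
  nlinarith [ks_s2]
lemma ksV28_pos : (0:ℝ) < ksV28 0 * ksV28 0 + ksV28 1 * ksV28 1 + ksV28 2 * ksV28 2 := by
  simp only [show ksV28 0 = (1 : ℝ) from rfl, show ksV28 1 = (-Real.sqrt 2) from rfl, show ksV28 2 = (0 : ℝ) from rfl]
  nlinarith [ks_s2]
lemma ksV29_pos : (0:ℝ) < ksV29 0 * ksV29 0 + ksV29 1 * ksV29 1 + ksV29 2 * ksV29 2 := by
  simp only [show ksV29 0 = (1 : ℝ) from rfl, show ksV29 1 = (-Real.sqrt 2) from rfl, show ksV29 2 = (1 : ℝ) from rfl]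
  nlinarith [ks_s2]
lemma ksV30_pos : (0:ℝ) < ksV30 0 * ksV30 0 + ksV30 1 * ksV30 1 + ksV30 2 * ksV30 2 := by
  simp only [show ksV30 0 = (1 : ℝ) from rfl, show ksV30 1 = (-Real.sqrt 2) from rfl, show ksV30 2 = (-1 : ℝ) from rfl]
  nlinarith [ks_s2]
lemma ksV33_pos : (0:ℝ) < ksV33 0 * ksV33 0 + ksV33 1 * ksV33 1 + ksV33 2 * ksV33 2 := by
  simp only [show ksV33 0 = Real.sqrt 2 from rfl, show ksV33 1 = (0 : ℝ) from rfl, show ksV33 2 = (1 : ℝ) from rfl]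
  nlinarith [ks_s2]
lemma ksV34_pos : (0:ℝ) < ksV34 0 * ksV34 0 + ksV34 1 * ksV34 1 + ksV34 2 * ksV34 2 := by
  simp only [show ksV34 0 = Real.sqrt 2 from rfl, show ksV34 1 = (0 : ℝ) from rfl, show ksV34 2 = (-1 : ℝ) from rfl]
  nlinarith [ks_s2]
lemma ksV35_pos : (0:ℝ) < ksV35 0 * ksV35 0 + ksV35 1 * ksV35 1 + ksV35 2 * ksV35 2 := by
  simp only [show ksV35 0 = Real.sqrt 2 from rfl, show ksV35 1 = (1 : ℝ) from rfl, show ksV35 2 = (0 : ℝ) from rfl]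
  nlinarith [ks_s2]
lemma ksV36_pos : (0:ℝ) < ksV36 0 * ksV36 0 + ksV36 1 * ksV36 1 + ksV36 2 * ksV36 2 := by
  simp only [show ksV36 0 = Real.sqrt 2 from rfl, show ksV36 1 = (1 : ℝ) from rfl, show ksV36 2 = (1 : ℝ) from rfl]
  nlinarith [ks_s2]
lemma ksV37_pos : (0:ℝ) < ksV37 0 * ksV37 0 + ksV37 1 * ksV37 1 + ksV37 2 * ksV37 2 := by
  simp only [show ksV37 0 = Real.sqrt 2 from rfl, show ksV37 1 = (1 : ℝ) from rfl, show ksV37 2 = (-1 : ℝ) from rfl]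
  nlinarith [ks_s2]
lemma ksV40_pos : (0:ℝ) < ksV40 0 * ksV40 0 + ksV40 1 * ksV40 1 + ksV40 2 * ksV40 2 := by
  simp only [show ksV40 0 = Real.sqrt 2 from rfl, show ksV40 1 = (-1 : ℝ) from rfl, show ksV40 2 = (0 : ℝ) from rfl]
  nlinarith [ks_s2]
lemma ksV41_pos : (0:ℝ) < ksV41 0 * ksV41 0 + ksV41 1 * ksV41 1 + ksV41 2 * ksV41 2 := by
  simp only [show ksV41 0 = Real.sqrt 2 from rfl, show ksV41 1 = (-1 : ℝ) from rfl, show ksV41 2 = (1 : ℝ) from rfl]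
  nlinarith [ks_s2]
lemma ksV42_pos : (0:ℝ) < ksV42 0 * ksV42 0 + ksV42 1 * ksV42 1 + ksV42 2 * ksV42 2 := by
  simp only [show ksV42 0 = Real.sqrt 2 from rfl, show ksV42 1 = (-1 : ℝ) from rfl, show ksV42 2 = (-1 : ℝ) from rfl]
  nlinarith [ks_s2]
lemma ksV57_pos : (0:ℝ) < ksV57 0 * ksV57 0 + ksV57 1 * ksV57 1 + ksV57 2 * ksV57 2 := by
  simp only [show ksV57 0 = (-3 : ℝ) from rfl, show ksV57 1 = Real.sqrt 2 from rfl, show ksV57 2 = (-1 : ℝ) from rfl]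
  nlinarith [ks_s2]
lemma ksV58_pos : (0:ℝ) < ksV58 0 * ksV58 0 + ksV58 1 * ksV58 1 + ksV58 2 * ksV58 2 := by
  simp only [show ksV58 0 = (3 : ℝ) from rfl, show ksV58 1 = Real.sqrt 2 from rfl, show ksV58 2 = (-1 : ℝ) from rfl]
  nlinarith [ks_s2]
lemma ksV61_pos : (0:ℝ) < ksV61 0 * ksV61 0 + ksV61 1 * ksV61 1 + ksV61 2 * ksV61 2 := by
  simp only [show ksV61 0 = (3 : ℝ) from rfl, show ksV61 1 = (-Real.sqrt 2) from rfl, show ksV61 2 = (-1 : ℝ) from rfl]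
  nlinarith [ks_s2]
lemma ksV62_pos : (0:ℝ) < ksV62 0 * ksV62 0 + ksV62 1 * ksV62 1 + ksV62 2 * ksV62 2 := by
  simp only [show ksV62 0 = (-3 : ℝ) from rfl, show ksV62 1 = (-Real.sqrt 2) from rfl, show ksV62 2 = (-1 : ℝ) from rfl]
  nlinarith [ks_s2]
lemma ksV65_pos : (0:ℝ) < ksV65 0 * ksV65 0 + ksV65 1 * ksV65 1 + ksV65 2 * ksV65 2 := by
  simp only [show ksV65 0 = (-3 : ℝ) from rfl, show ksV65 1 = (1 : ℝ) from rfl, show ksV65 2 = (-Real.sqrt 2) from rfl]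
  nlinarith [ks_s2]
lemma ksV66_pos : (0:ℝ) < ksV66 0 * ksV66 0 + ksV66 1 * ksV66 1 + ksV66 2 * ksV66 2 := by
  simp only [show ksV66 0 = (3 : ℝ) from rfl, show ksV66 1 = (1 : ℝ) from rfl, show ksV66 2 = (-Real.sqrt 2) from rfl]
  nlinarith [ks_s2]
lemma ksV69_pos : (0:ℝ) < ksV69 0 * ksV69 0 + ksV69 1 * ksV69 1 + ksV69 2 * ksV69 2 := by
  simp only [show ksV69 0 = (3 : ℝ) from rfl, show ksV69 1 = (-1 : ℝ) from rfl, show ksV69 2 = (-Real.sqrt 2) from rfl]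
  nlinarith [ks_s2]
lemma ksV70_pos : (0:ℝ) < ksV70 0 * ksV70 0 + ksV70 1 * ksV70 1 + ksV70 2 * ksV70 2 := by
  simp only [show ksV70 0 = (-3 : ℝ) from rfl, show ksV70 1 = (-1 : ℝ) from rfl, show ksV70 2 = (-Real.sqrt 2) from rfl]
  nlinarith [ks_s2]
lemma ksV81_pos : (0:ℝ) < ksV81 0 * ksV81 0 + ksV81 1 * ksV81 1 + ksV81 2 * ksV81 2 := by
  simp only [show ksV81 0 = (-Real.sqrt 2) from rfl, show ksV81 1 = (3 : ℝ) from rfl, show ksV81 2 = (1 : ℝ) from rfl]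
  nlinarith [ks_s2]
lemma ksV82_pos : (0:ℝ) < ksV82 0 * ksV82 0 + ksV82 1 * ksV82 1 + ksV82 2 * ksV82 2 := by
  simp only [show ksV82 0 = Real.sqrt 2 from rfl, show ksV82 1 = (3 : ℝ) from rfl, show ksV82 2 = (-1 : ℝ) from rfl]
  nlinarith [ks_s2]
lemma ksV85_pos : (0:ℝ) < ksV85 0 * ksV85 0 + ksV85 1 * ksV85 1 + ksV85 2 * ksV85 2 := by
  simp only [show ksV85 0 = Real.sqrt 2 from rfl, show ksV85 1 = (-3 : ℝ) from rfl, show ksV85 2 = (1 : ℝ) from rfl]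
  nlinarith [ks_s2]
lemma ksV86_pos : (0:ℝ) < ksV86 0 * ksV86 0 + ksV86 1 * ksV86 1 + ksV86 2 * ksV86 2 := by
  simp only [show ksV86 0 = (-Real.sqrt 2) from rfl, show ksV86 1 = (-3 : ℝ) from rfl, show ksV86 2 = (-1 : ℝ) from rfl]
  nlinarith [ks_s2]
lemma ksV95_pos : (0:ℝ) < ksV95 0 * ksV95 0 + ksV95 1 * ksV95 1 + ksV95 2 * ksV95 2 := by
  simp only [show ksV95 0 = (-1 : ℝ) from rfl, show ksV95 1 = (3 : ℝ) from rfl, show ksV95 2 = (-Real.sqrt 2) from rfl]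
  nlinarith [ks_s2]
lemma ksV96_pos : (0:ℝ) < ksV96 0 * ksV96 0 + ksV96 1 * ksV96 1 + ksV96 2 * ksV96 2 := by
  simp only [show ksV96 0 = (1 : ℝ) from rfl, show ksV96 1 = (-3 : ℝ) from rfl, show ksV96 2 = (-Real.sqrt 2) from rfl]
  nlinarith [ks_s2]
lemma ksV99_pos : (0:ℝ) < ksV99 0 * ksV99 0 + ksV99 1 * ksV99 1 + ksV99 2 * ksV99 2 := by
  simp only [show ksV99 0 = (1 : ℝ) from rfl, show ksV99 1 = (3 : ℝ) from rfl, show ksV99 2 = Real.sqrt 2 from rfl]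
  nlinarith [ks_s2]
lemma ksV100_pos : (0:ℝ) < ksV100 0 * ksV100 0 + ksV100 1 * ksV100 1 + ksV100 2 * ksV100 2 := by
  simp only [show ksV100 0 = (-1 : ℝ) from rfl, show ksV100 1 = (-3 : ℝ) from rfl, show ksV100 2 = Real.sqrt 2 from rfl]
  nlinarith [ks_s2]
lemma ksV101_pos : (0:ℝ) < ksV101 0 * ksV101 0 + ksV101 1 * ksV101 1 + ksV101 2 * ksV101 2 := by
  simp only [show ksV101 0 = Real.sqrt 2 from rfl, show ksV101 1 = (-1 : ℝ) from rfl, show ksV101 2 = (-3 : ℝ) from rfl]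
  nlinarith [ks_s2]
lemma ksV102_pos : (0:ℝ) < ksV102 0 * ksV102 0 + ksV102 1 * ksV102 1 + ksV102 2 * ksV102 2 := by
  simp only [show ksV102 0 = (-Real.sqrt 2) from rfl, show ksV102 1 = (1 : ℝ) from rfl, show ksV102 2 = (-3 : ℝ) from rfl]
  nlinarith [ks_s2]
lemma ksV105_pos : (0:ℝ) < ksV105 0 * ksV105 0 + ksV105 1 * ksV105 1 + ksV105 2 * ksV105 2 := by
  simp only [show ksV105 0 = (1 : ℝ) from rfl, show ksV105 1 = Real.sqrt 2 from rfl, show ksV105 2 = (-3 : ℝ) from rfl]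
  nlinarith [ks_s2]
lemma ksV106_pos : (0:ℝ) < ksV106 0 * ksV106 0 + ksV106 1 * ksV106 1 + ksV106 2 * ksV106 2 := by
  simp only [show ksV106 0 = (-1 : ℝ) from rfl, show ksV106 1 = (-Real.sqrt 2) from rfl, show ksV106 2 = (-3 : ℝ) from rfl]
  nlinarith [ks_s2]
lemma ksV111_pos : (0:ℝ) < ksV111 0 * ksV111 0 + ksV111 1 * ksV111 1 + ksV111 2 * ksV111 2 := by
  simp only [show ksV111 0 = (-Real.sqrt 2) from rfl, show ksV111 1 = (-1 : ℝ) from rfl, show ksV111 2 = (3 : ℝ) from rfl]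
  nlinarith [ks_s2]
lemma ksV112_pos : (0:ℝ) < ksV112 0 * ksV112 0 + ksV112 1 * ksV112 1 + ksV112 2 * ksV112 2 := by
  simp only [show ksV112 0 = Real.sqrt 2 from rfl, show ksV112 1 = (1 : ℝ) from rfl, show ksV112 2 = (3 : ℝ) from rfl]
  nlinarith [ks_s2]
lemma ksV115_pos : (0:ℝ) < ksV115 0 * ksV115 0 + ksV115 1 * ksV115 1 + ksV115 2 * ksV115 2 := by
  simp only [show ksV115 0 = (-1 : ℝ) from rfl, show ksV115 1 = Real.sqrt 2 from rfl, show ksV115 2 = (3 : ℝ) from rfl]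
  nlinarith [ks_s2]
lemma ksV116_pos : (0:ℝ) < ksV116 0 * ksV116 0 + ksV116 1 * ksV116 1 + ksV116 2 * ksV116 2 := by
  simp only [show ksV116 0 = (1 : ℝ) from rfl, show ksV116 1 = (-Real.sqrt 2) from rfl, show ksV116 2 = (3 : ℝ) from rfl]
  nlinarith [ks_s2]
lemma ksO_0_1 : ksV0 0 * ksV1 0 + ksV0 1 * ksV1 1 + ksV0 2 * ksV1 2 = 0 := by
  simp only [show ksV0 0 = (0 : ℝ) from rfl, show ksV0 1 = (0 : ℝ) from rfl, show ksV0 2 = (1 : ℝ) from rfl, show ksV1 0 = (0 : ℝ) from rfl, show ksV1 1 = (1 : ℝ) from rfl, show ksV1 2 = (0 : ℝ) from rfl]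
  norm_num
lemma ksO_0_8 : ksV0 0 * ksV8 0 + ksV0 1 * ksV8 1 + ksV0 2 * ksV8 2 = 0 := by
  simp only [show ksV0 0 = (0 : ℝ) from rfl, show ksV0 1 = (0 : ℝ) from rfl, show ksV0 2 = (1 : ℝ) from rfl, show ksV8 0 = (1 : ℝ) from rfl, show ksV8 1 = (0 : ℝ) from rfl, show ksV8 2 = (0 : ℝ) from rfl]
  norm_num
lemma ksO_0_13 : ksV0 0 * ksV13 0 + ksV0 1 * ksV13 1 + ksV0 2 * ksV13 2 = 0 := by
  simp only [show ksV0 0 = (0 : ℝ) from rfl, show ksV0 1 = (0 : ℝ) from rfl, show ksV0 2 = (1 : ℝ) from rfl, show ksV13 0 = (1 : ℝ) from rfl, show ksV13 1 = (1 : ℝ) from rfl, show ksV13 2 = (0 : ℝ) from rfl]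
  norm_num
lemma ksO_0_18 : ksV0 0 * ksV18 0 + ksV0 1 * ksV18 1 + ksV0 2 * ksV18 2 = 0 := by
  simp only [show ksV0 0 = (0 : ℝ) from rfl, show ksV0 1 = (0 : ℝ) from rfl, show ksV0 2 = (1 : ℝ) from rfl, show ksV18 0 = (1 : ℝ) from rfl, show ksV18 1 = (-1 : ℝ) from rfl, show ksV18 2 = (0 : ℝ) from rfl]
  norm_num
lemma ksO_0_23 : ksV0 0 * ksV23 0 + ksV0 1 * ksV23 1 + ksV0 2 * ksV23 2 = 0 := by
  simp only [show ksV0 0 = (0 : ℝ) from rfl, show ksV0 1 = (0 : ℝ) from rfl, show ksV0 2 = (1 : ℝ) from rfl, show ksV23 0 = (1 : ℝ) from rfl, show ksV23 1 = Real.sqrt 2 from rfl, show ksV23 2 = (0 : ℝ) from rfl]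
  norm_num
lemma ksO_0_28 : ksV0 0 * ksV28 0 + ksV0 1 * ksV28 1 + ksV0 2 * ksV28 2 = 0 := by
  simp only [show ksV0 0 = (0 : ℝ) from rfl, show ksV0 1 = (0 : ℝ) from rfl, show ksV0 2 = (1 : ℝ) from rfl, show ksV28 0 = (1 : ℝ) from rfl, show ksV28 1 = (-Real.sqrt 2) from rfl, show ksV28 2 = (0 : ℝ) from rfl]
  norm_num
lemma ksO_0_35 : ksV0 0 * ksV35 0 + ksV0 1 * ksV35 1 + ksV0 2 * ksV35 2 = 0 := by
  simp only [show ksV0 0 = (0 : ℝ) from rfl, show ksV0 1 = (0 : ℝ) from rfl, show ksV0 2 = (1 : ℝ) from rfl, show ksV35 0 = Real.sqrt 2 from rfl, show ksV35 1 = (1 : ℝ) from rfl, show ksV35 2 = (0 : ℝ) from rfl]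
  norm_num
lemma ksO_0_40 : ksV0 0 * ksV40 0 + ksV0 1 * ksV40 1 + ksV0 2 * ksV40 2 = 0 := by
  simp only [show ksV0 0 = (0 : ℝ) from rfl, show ksV0 1 = (0 : ℝ) from rfl, show ksV0 2 = (1 : ℝ) from rfl, show ksV40 0 = Real.sqrt 2 from rfl, show ksV40 1 = (-1 : ℝ) from rfl, show ksV40 2 = (0 : ℝ) from rfl]
  norm_num
lemma ksO_1_8 : ksV1 0 * ksV8 0 + ksV1 1 * ksV8 1 + ksV1 2 * ksV8 2 = 0 := by
  simp only [show ksV1 0 = (0 : ℝ) from rfl, show ksV1 1 = (1 : ℝ) from rfl, show ksV1 2 = (0 : ℝ) from rfl, show ksV8 0 = (1 : ℝ) from rfl, show ksV8 1 = (0 : ℝ) from rfl, show ksV8 2 = (0 : ℝ) from rfl]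
  norm_num
lemma ksO_1_9 : ksV1 0 * ksV9 0 + ksV1 1 * ksV9 1 + ksV1 2 * ksV9 2 = 0 := by
  simp only [show ksV1 0 = (0 : ℝ) from rfl, show ksV1 1 = (1 : ℝ) from rfl, show ksV1 2 = (0 : ℝ) from rfl, show ksV9 0 = (1 : ℝ) from rfl, show ksV9 1 = (0 : ℝ) from rfl, show ksV9 2 = (1 : ℝ) from rfl]
  norm_num
lemma ksO_1_10 : ksV1 0 * ksV10 0 + ksV1 1 * ksV10 1 + ksV1 2 * ksV10 2 = 0 := by
  simp only [show ksV1 0 = (0 : ℝ) from rfl, show ksV1 1 = (1 : ℝ) from rfl, show ksV1 2 = (0 : ℝ) from rfl, show ksV10 0 = (1 : ℝ) from rfl, show ksV10 1 = (0 : ℝ) from rfl, show ksV10 2 = (-1 : ℝ) from rfl]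
  norm_num
lemma ksO_1_11 : ksV1 0 * ksV11 0 + ksV1 1 * ksV11 1 + ksV1 2 * ksV11 2 = 0 := by
  simp only [show ksV1 0 = (0 : ℝ) from rfl, show ksV1 1 = (1 : ℝ) from rfl, show ksV1 2 = (0 : ℝ) from rfl, show ksV11 0 = (1 : ℝ) from rfl, show ksV11 1 = (0 : ℝ) from rfl, show ksV11 2 = Real.sqrt 2 from rfl]
  norm_num
lemma ksO_1_12 : ksV1 0 * ksV12 0 + ksV1 1 * ksV12 1 + ksV1 2 * ksV12 2 = 0 := by
  simp only [show ksV1 0 = (0 : ℝ) from rfl, show ksV1 1 = (1 : ℝ) from rfl, show ksV1 2 = (0 : ℝ) from rfl, show ksV12 0 = (1 : ℝ) from rfl, show ksV12 1 = (0 : ℝ) from rfl, show ksV12 2 = (-Real.sqrt 2) from rfl]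
  norm_num
lemma ksO_1_33 : ksV1 0 * ksV33 0 + ksV1 1 * ksV33 1 + ksV1 2 * ksV33 2 = 0 := by
  simp only [show ksV1 0 = (0 : ℝ) from rfl, show ksV1 1 = (1 : ℝ) from rfl, show ksV1 2 = (0 : ℝ) from rfl, show ksV33 0 = Real.sqrt 2 from rfl, show ksV33 1 = (0 : ℝ) from rfl, show ksV33 2 = (1 : ℝ) from rfl]
  norm_num
lemma ksO_1_34 : ksV1 0 * ksV34 0 + ksV1 1 * ksV34 1 + ksV1 2 * ksV34 2 = 0 := by
  simp only [show ksV1 0 = (0 : ℝ) from rfl, show ksV1 1 = (1 : ℝ) from rfl, show ksV1 2 = (0 : ℝ) from rfl, show ksV34 0 = Real.sqrt 2 from rfl, show ksV34 1 = (0 : ℝ) from rfl, show ksV34 2 = (-1 : ℝ) from rfl]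
  norm_num
lemma ksO_2_3 : ksV2 0 * ksV3 0 + ksV2 1 * ksV3 1 + ksV2 2 * ksV3 2 = 0 := by
  simp only [show ksV2 0 = (0 : ℝ) from rfl, show ksV2 1 = (1 : ℝ) from rfl, show ksV2 2 = (1 : ℝ) from rfl, show ksV3 0 = (0 : ℝ) from rfl, show ksV3 1 = (1 : ℝ) from rfl, show ksV3 2 = (-1 : ℝ) from rfl]
  norm_num
lemma ksO_2_8 : ksV2 0 * ksV8 0 + ksV2 1 * ksV8 1 + ksV2 2 * ksV8 2 = 0 := by
  simp only [show ksV2 0 = (0 : ℝ) from rfl, show ksV2 1 = (1 : ℝ) from rfl, show ksV2 2 = (1 : ℝ) from rfl, show ksV8 0 = (1 : ℝ) from rfl, show ksV8 1 = (0 : ℝ) from rfl, show ksV8 2 = (0 : ℝ) from rfl]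
  norm_num
lemma ksO_2_37 : ksV2 0 * ksV37 0 + ksV2 1 * ksV37 1 + ksV2 2 * ksV37 2 = 0 := by
  simp only [show ksV2 0 = (0 : ℝ) from rfl, show ksV2 1 = (1 : ℝ) from rfl, show ksV2 2 = (1 : ℝ) from rfl, show ksV37 0 = Real.sqrt 2 from rfl, show ksV37 1 = (1 : ℝ) from rfl, show ksV37 2 = (-1 : ℝ) from rfl]
  norm_num
lemma ksO_2_41 : ksV2 0 * ksV41 0 + ksV2 1 * ksV41 1 + ksV2 2 * ksV41 2 = 0 := by
  simp only [show ksV2 0 = (0 : ℝ) from rfl, show ksV2 1 = (1 : ℝ) from rfl, show ksV2 2 = (1 : ℝ) from rfl, show ksV41 0 = Real.sqrt 2 from rfl, show ksV41 1 = (-1 : ℝ) from rfl, show ksV41 2 = (1 : ℝ) from rfl]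
  norm_num
lemma ksO_3_8 : ksV3 0 * ksV8 0 + ksV3 1 * ksV8 1 + ksV3 2 * ksV8 2 = 0 := by
  simp only [show ksV3 0 = (0 : ℝ) from rfl, show ksV3 1 = (1 : ℝ) from rfl, show ksV3 2 = (-1 : ℝ) from rfl, show ksV8 0 = (1 : ℝ) from rfl, show ksV8 1 = (0 : ℝ) from rfl, show ksV8 2 = (0 : ℝ) from rfl]
  norm_num
lemma ksO_3_36 : ksV3 0 * ksV36 0 + ksV3 1 * ksV36 1 + ksV3 2 * ksV36 2 = 0 := by
  simp only [show ksV3 0 = (0 : ℝ) from rfl, show ksV3 1 = (1 : ℝ) from rfl, show ksV3 2 = (-1 : ℝ) from rfl, show ksV36 0 = Real.sqrt 2 from rfl, show ksV36 1 = (1 : ℝ) from rfl, show ksV36 2 = (1 : ℝ) from rfl]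
  norm_num
lemma ksO_3_42 : ksV3 0 * ksV42 0 + ksV3 1 * ksV42 1 + ksV3 2 * ksV42 2 = 0 := by
  simp only [show ksV3 0 = (0 : ℝ) from rfl, show ksV3 1 = (1 : ℝ) from rfl, show ksV3 2 = (-1 : ℝ) from rfl, show ksV42 0 = Real.sqrt 2 from rfl, show ksV42 1 = (-1 : ℝ) from rfl, show ksV42 2 = (-1 : ℝ) from rfl]
  norm_num
lemma ksO_4_7 : ksV4 0 * ksV7 0 + ksV4 1 * ksV7 1 + ksV4 2 * ksV7 2 = 0 := by
  simp only [show ksV4 0 = (0 : ℝ) from rfl, show ksV4 1 = (1 : ℝ) from rfl, show ksV4 2 = Real.sqrt 2 from rfl, show ksV7 0 = (0 : ℝ) from rfl, show ksV7 1 = Real.sqrt 2 from rfl, show ksV7 2 = (-1 : ℝ) from rfl]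
  norm_num
lemma ksO_4_8 : ksV4 0 * ksV8 0 + ksV4 1 * ksV8 1 + ksV4 2 * ksV8 2 = 0 := by
  simp only [show ksV4 0 = (0 : ℝ) from rfl, show ksV4 1 = (1 : ℝ) from rfl, show ksV4 2 = Real.sqrt 2 from rfl, show ksV8 0 = (1 : ℝ) from rfl, show ksV8 1 = (0 : ℝ) from rfl, show ksV8 2 = (0 : ℝ) from rfl]
  norm_num
lemma ksO_4_25 : ksV4 0 * ksV25 0 + ksV4 1 * ksV25 1 + ksV4 2 * ksV25 2 = 0 := by
  simp only [show ksV4 0 = (0 : ℝ) from rfl, show ksV4 1 = (1 : ℝ) from rfl, show ksV4 2 = Real.sqrt 2 from rfl, show ksV25 0 = (1 : ℝ) from rfl, show ksV25 1 = Real.sqrt 2 from rfl, show ksV25 2 = (-1 : ℝ) from rfl]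
  norm_num
lemma ksO_4_29 : ksV4 0 * ksV29 0 + ksV4 1 * ksV29 1 + ksV4 2 * ksV29 2 = 0 := by
  simp only [show ksV4 0 = (0 : ℝ) from rfl, show ksV4 1 = (1 : ℝ) from rfl, show ksV4 2 = Real.sqrt 2 from rfl, show ksV29 0 = (1 : ℝ) from rfl, show ksV29 1 = (-Real.sqrt 2) from rfl, show ksV29 2 = (1 : ℝ) from rfl]
  norm_num
lemma ksO_4_57 : ksV4 0 * ksV57 0 + ksV4 1 * ksV57 1 + ksV4 2 * ksV57 2 = 0 := by
  simp only [show ksV4 0 = (0 : ℝ) from rfl, show ksV4 1 = (1 : ℝ) from rfl, show ksV4 2 = Real.sqrt 2 from rfl, show ksV57 0 = (-3 : ℝ) from rfl, show ksV57 1 = Real.sqrt 2 from rfl, show ksV57 2 = (-1 : ℝ) from rfl]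
  norm_num
lemma ksO_4_58 : ksV4 0 * ksV58 0 + ksV4 1 * ksV58 1 + ksV4 2 * ksV58 2 = 0 := by
  simp only [show ksV4 0 = (0 : ℝ) from rfl, show ksV4 1 = (1 : ℝ) from rfl, show ksV4 2 = Real.sqrt 2 from rfl, show ksV58 0 = (3 : ℝ) from rfl, show ksV58 1 = Real.sqrt 2 from rfl, show ksV58 2 = (-1 : ℝ) from rfl]
  norm_num
lemma ksO_5_6 : ksV5 0 * ksV6 0 + ksV5 1 * ksV6 1 + ksV5 2 * ksV6 2 = 0 := by
  simp only [show ksV5 0 = (0 : ℝ) from rfl, show ksV5 1 = (1 : ℝ) from rfl, show ksV5 2 = (-Real.sqrt 2) from rfl, show ksV6 0 = (0 : ℝ) from rfl, show ksV6 1 = Real.sqrt 2 from rfl, show ksV6 2 = (1 : ℝ) from rfl]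
  norm_num
lemma ksO_5_8 : ksV5 0 * ksV8 0 + ksV5 1 * ksV8 1 + ksV5 2 * ksV8 2 = 0 := by
  simp only [show ksV5 0 = (0 : ℝ) from rfl, show ksV5 1 = (1 : ℝ) from rfl, show ksV5 2 = (-Real.sqrt 2) from rfl, show ksV8 0 = (1 : ℝ) from rfl, show ksV8 1 = (0 : ℝ) from rfl, show ksV8 2 = (0 : ℝ) from rfl]
  norm_num
lemma ksO_5_24 : ksV5 0 * ksV24 0 + ksV5 1 * ksV24 1 + ksV5 2 * ksV24 2 = 0 := by
  simp only [show ksV5 0 = (0 : ℝ) from rfl, show ksV5 1 = (1 : ℝ) from rfl, show ksV5 2 = (-Real.sqrt 2) from rfl, show ksV24 0 = (1 : ℝ) from rfl, show ksV24 1 = Real.sqrt 2 from rfl, show ksV24 2 = (1 : ℝ) from rfl]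
  norm_num
lemma ksO_5_30 : ksV5 0 * ksV30 0 + ksV5 1 * ksV30 1 + ksV5 2 * ksV30 2 = 0 := by
  simp only [show ksV5 0 = (0 : ℝ) from rfl, show ksV5 1 = (1 : ℝ) from rfl, show ksV5 2 = (-Real.sqrt 2) from rfl, show ksV30 0 = (1 : ℝ) from rfl, show ksV30 1 = (-Real.sqrt 2) from rfl, show ksV30 2 = (-1 : ℝ) from rfl]
  norm_num
lemma ksO_5_61 : ksV5 0 * ksV61 0 + ksV5 1 * ksV61 1 + ksV5 2 * ksV61 2 = 0 := by
  simp only [show ksV5 0 = (0 : ℝ) from rfl, show ksV5 1 = (1 : ℝ) from rfl, show ksV5 2 = (-Real.sqrt 2) from rfl, show ksV61 0 = (3 : ℝ) from rfl, show ksV61 1 = (-Real.sqrt 2) from rfl, show ksV61 2 = (-1 : ℝ) from rfl]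
  norm_num
lemma ksO_5_62 : ksV5 0 * ksV62 0 + ksV5 1 * ksV62 1 + ksV5 2 * ksV62 2 = 0 := by
  simp only [show ksV5 0 = (0 : ℝ) from rfl, show ksV5 1 = (1 : ℝ) from rfl, show ksV5 2 = (-Real.sqrt 2) from rfl, show ksV62 0 = (-3 : ℝ) from rfl, show ksV62 1 = (-Real.sqrt 2) from rfl, show ksV62 2 = (-1 : ℝ) from rfl]
  norm_num
lemma ksO_6_8 : ksV6 0 * ksV8 0 + ksV6 1 * ksV8 1 + ksV6 2 * ksV8 2 = 0 := by
  simp only [show ksV6 0 = (0 : ℝ) from rfl, show ksV6 1 = Real.sqrt 2 from rfl, show ksV6 2 = (1 : ℝ) from rfl, show ksV8 0 = (1 : ℝ) from rfl, show ksV8 1 = (0 : ℝ) from rfl, show ksV8 2 = (0 : ℝ) from rfl]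
  norm_num
lemma ksO_6_17 : ksV6 0 * ksV17 0 + ksV6 1 * ksV17 1 + ksV6 2 * ksV17 2 = 0 := by
  simp only [show ksV6 0 = (0 : ℝ) from rfl, show ksV6 1 = Real.sqrt 2 from rfl, show ksV6 2 = (1 : ℝ) from rfl, show ksV17 0 = (1 : ℝ) from rfl, show ksV17 1 = (1 : ℝ) from rfl, show ksV17 2 = (-Real.sqrt 2) from rfl]
  norm_num
lemma ksO_6_21 : ksV6 0 * ksV21 0 + ksV6 1 * ksV21 1 + ksV6 2 * ksV21 2 = 0 := by
  simp only [show ksV6 0 = (0 : ℝ) from rfl, show ksV6 1 = Real.sqrt 2 from rfl, show ksV6 2 = (1 : ℝ) from rfl, show ksV21 0 = (1 : ℝ) from rfl, show ksV21 1 = (-1 : ℝ) from rfl, show ksV21 2 = Real.sqrt 2 from rfl]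
  norm_num
lemma ksO_6_65 : ksV6 0 * ksV65 0 + ksV6 1 * ksV65 1 + ksV6 2 * ksV65 2 = 0 := by
  simp only [show ksV6 0 = (0 : ℝ) from rfl, show ksV6 1 = Real.sqrt 2 from rfl, show ksV6 2 = (1 : ℝ) from rfl, show ksV65 0 = (-3 : ℝ) from rfl, show ksV65 1 = (1 : ℝ) from rfl, show ksV65 2 = (-Real.sqrt 2) from rfl]
  norm_num
lemma ksO_6_66 : ksV6 0 * ksV66 0 + ksV6 1 * ksV66 1 + ksV6 2 * ksV66 2 = 0 := by
  simp only [show ksV6 0 = (0 : ℝ) from rfl, show ksV6 1 = Real.sqrt 2 from rfl, show ksV6 2 = (1 : ℝ) from rfl, show ksV66 0 = (3 : ℝ) from rfl, show ksV66 1 = (1 : ℝ) from rfl, show ksV66 2 = (-Real.sqrt 2) from rfl]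
  norm_num
lemma ksO_7_8 : ksV7 0 * ksV8 0 + ksV7 1 * ksV8 1 + ksV7 2 * ksV8 2 = 0 := by
  simp only [show ksV7 0 = (0 : ℝ) from rfl, show ksV7 1 = Real.sqrt 2 from rfl, show ksV7 2 = (-1 : ℝ) from rfl, show ksV8 0 = (1 : ℝ) from rfl, show ksV8 1 = (0 : ℝ) from rfl, show ksV8 2 = (0 : ℝ) from rfl]
  norm_num
lemma ksO_7_16 : ksV7 0 * ksV16 0 + ksV7 1 * ksV16 1 + ksV7 2 * ksV16 2 = 0 := by
  simp only [show ksV7 0 = (0 : ℝ) from rfl, show ksV7 1 = Real.sqrt 2 from rfl, show ksV7 2 = (-1 : ℝ) from rfl, show ksV16 0 = (1 : ℝ) from rfl, show ksV16 1 = (1 : ℝ) from rfl, show ksV16 2 = Real.sqrt 2 from rfl]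
  norm_num
lemma ksO_7_22 : ksV7 0 * ksV22 0 + ksV7 1 * ksV22 1 + ksV7 2 * ksV22 2 = 0 := by
  simp only [show ksV7 0 = (0 : ℝ) from rfl, show ksV7 1 = Real.sqrt 2 from rfl, show ksV7 2 = (-1 : ℝ) from rfl, show ksV22 0 = (1 : ℝ) from rfl, show ksV22 1 = (-1 : ℝ) from rfl, show ksV22 2 = (-Real.sqrt 2) from rfl]
  norm_num
lemma ksO_7_69 : ksV7 0 * ksV69 0 + ksV7 1 * ksV69 1 + ksV7 2 * ksV69 2 = 0 := by
  simp only [show ksV7 0 = (0 : ℝ) from rfl, show ksV7 1 = Real.sqrt 2 from rfl, show ksV7 2 = (-1 : ℝ) from rfl, show ksV69 0 = (3 : ℝ) from rfl, show ksV69 1 = (-1 : ℝ) from rfl, show ksV69 2 = (-Real.sqrt 2) from rfl]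
  norm_num
lemma ksO_7_70 : ksV7 0 * ksV70 0 + ksV7 1 * ksV70 1 + ksV7 2 * ksV70 2 = 0 := by
  simp only [show ksV7 0 = (0 : ℝ) from rfl, show ksV7 1 = Real.sqrt 2 from rfl, show ksV7 2 = (-1 : ℝ) from rfl, show ksV70 0 = (-3 : ℝ) from rfl, show ksV70 1 = (-1 : ℝ) from rfl, show ksV70 2 = (-Real.sqrt 2) from rfl]
  norm_num
lemma ksO_9_10 : ksV9 0 * ksV10 0 + ksV9 1 * ksV10 1 + ksV9 2 * ksV10 2 = 0 := by
  simp only [show ksV9 0 = (1 : ℝ) from rfl, show ksV9 1 = (0 : ℝ) from rfl, show ksV9 2 = (1 : ℝ) from rfl, show ksV10 0 = (1 : ℝ) from rfl, show ksV10 1 = (0 : ℝ) from rfl, show ksV10 2 = (-1 : ℝ) from rfl]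
  norm_num
lemma ksO_9_25 : ksV9 0 * ksV25 0 + ksV9 1 * ksV25 1 + ksV9 2 * ksV25 2 = 0 := by
  simp only [show ksV9 0 = (1 : ℝ) from rfl, show ksV9 1 = (0 : ℝ) from rfl, show ksV9 2 = (1 : ℝ) from rfl, show ksV25 0 = (1 : ℝ) from rfl, show ksV25 1 = Real.sqrt 2 from rfl, show ksV25 2 = (-1 : ℝ) from rfl]
  norm_num
lemma ksO_9_30 : ksV9 0 * ksV30 0 + ksV9 1 * ksV30 1 + ksV9 2 * ksV30 2 = 0 := by
  simp only [show ksV9 0 = (1 : ℝ) from rfl, show ksV9 1 = (0 : ℝ) from rfl, show ksV9 2 = (1 : ℝ) from rfl, show ksV30 0 = (1 : ℝ) from rfl, show ksV30 1 = (-Real.sqrt 2) from rfl, show ksV30 2 = (-1 : ℝ) from rfl]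
  norm_num
lemma ksO_10_24 : ksV10 0 * ksV24 0 + ksV10 1 * ksV24 1 + ksV10 2 * ksV24 2 = 0 := by
  simp only [show ksV10 0 = (1 : ℝ) from rfl, show ksV10 1 = (0 : ℝ) from rfl, show ksV10 2 = (-1 : ℝ) from rfl, show ksV24 0 = (1 : ℝ) from rfl, show ksV24 1 = Real.sqrt 2 from rfl, show ksV24 2 = (1 : ℝ) from rfl]
  norm_num
lemma ksO_10_29 : ksV10 0 * ksV29 0 + ksV10 1 * ksV29 1 + ksV10 2 * ksV29 2 = 0 := by
  simp only [show ksV10 0 = (1 : ℝ) from rfl, show ksV10 1 = (0 : ℝ) from rfl, show ksV10 2 = (-1 : ℝ) from rfl, show ksV29 0 = (1 : ℝ) from rfl, show ksV29 1 = (-Real.sqrt 2) from rfl, show ksV29 2 = (1 : ℝ) from rfl]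
  norm_num
lemma ksO_11_34 : ksV11 0 * ksV34 0 + ksV11 1 * ksV34 1 + ksV11 2 * ksV34 2 = 0 := by
  simp only [show ksV11 0 = (1 : ℝ) from rfl, show ksV11 1 = (0 : ℝ) from rfl, show ksV11 2 = Real.sqrt 2 from rfl, show ksV34 0 = Real.sqrt 2 from rfl, show ksV34 1 = (0 : ℝ) from rfl, show ksV34 2 = (-1 : ℝ) from rfl]
  norm_num
lemma ksO_11_37 : ksV11 0 * ksV37 0 + ksV11 1 * ksV37 1 + ksV11 2 * ksV37 2 = 0 := by
  simp only [show ksV11 0 = (1 : ℝ) from rfl, show ksV11 1 = (0 : ℝ) from rfl, show ksV11 2 = Real.sqrt 2 from rfl, show ksV37 0 = Real.sqrt 2 from rfl, show ksV37 1 = (1 : ℝ) from rfl, show ksV37 2 = (-1 : ℝ) from rfl]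
  norm_num
lemma ksO_11_42 : ksV11 0 * ksV42 0 + ksV11 1 * ksV42 1 + ksV11 2 * ksV42 2 = 0 := by
  simp only [show ksV11 0 = (1 : ℝ) from rfl, show ksV11 1 = (0 : ℝ) from rfl, show ksV11 2 = Real.sqrt 2 from rfl, show ksV42 0 = Real.sqrt 2 from rfl, show ksV42 1 = (-1 : ℝ) from rfl, show ksV42 2 = (-1 : ℝ) from rfl]
  norm_num
lemma ksO_11_81 : ksV11 0 * ksV81 0 + ksV11 1 * ksV81 1 + ksV11 2 * ksV81 2 = 0 := by
  simp only [show ksV11 0 = (1 : ℝ) from rfl, show ksV11 1 = (0 : ℝ) from rfl, show ksV11 2 = Real.sqrt 2 from rfl, show ksV81 0 = (-Real.sqrt 2) from rfl, show ksV81 1 = (3 : ℝ) from rfl, show ksV81 2 = (1 : ℝ) from rfl]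
  norm_num
lemma ksO_11_82 : ksV11 0 * ksV82 0 + ksV11 1 * ksV82 1 + ksV11 2 * ksV82 2 = 0 := by
  simp only [show ksV11 0 = (1 : ℝ) from rfl, show ksV11 1 = (0 : ℝ) from rfl, show ksV11 2 = Real.sqrt 2 from rfl, show ksV82 0 = Real.sqrt 2 from rfl, show ksV82 1 = (3 : ℝ) from rfl, show ksV82 2 = (-1 : ℝ) from rfl]
  norm_num
lemma ksO_12_33 : ksV12 0 * ksV33 0 + ksV12 1 * ksV33 1 + ksV12 2 * ksV33 2 = 0 := by
  simp only [show ksV12 0 = (1 : ℝ) from rfl, show ksV12 1 = (0 : ℝ) from rfl, show ksV12 2 = (-Real.sqrt 2) from rfl, show ksV33 0 = Real.sqrt 2 from rfl, show ksV33 1 = (0 : ℝ) from rfl, show ksV33 2 = (1 : ℝ) from rfl]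
  norm_num
lemma ksO_12_36 : ksV12 0 * ksV36 0 + ksV12 1 * ksV36 1 + ksV12 2 * ksV36 2 = 0 := by
  simp only [show ksV12 0 = (1 : ℝ) from rfl, show ksV12 1 = (0 : ℝ) from rfl, show ksV12 2 = (-Real.sqrt 2) from rfl, show ksV36 0 = Real.sqrt 2 from rfl, show ksV36 1 = (1 : ℝ) from rfl, show ksV36 2 = (1 : ℝ) from rfl]
  norm_num
lemma ksO_12_41 : ksV12 0 * ksV41 0 + ksV12 1 * ksV41 1 + ksV12 2 * ksV41 2 = 0 := by
  simp only [show ksV12 0 = (1 : ℝ) from rfl, show ksV12 1 = (0 : ℝ) from rfl, show ksV12 2 = (-Real.sqrt 2) from rfl, show ksV41 0 = Real.sqrt 2 from rfl, show ksV41 1 = (-1 : ℝ) from rfl, show ksV41 2 = (1 : ℝ) from rfl]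
  norm_num
lemma ksO_12_85 : ksV12 0 * ksV85 0 + ksV12 1 * ksV85 1 + ksV12 2 * ksV85 2 = 0 := by
  simp only [show ksV12 0 = (1 : ℝ) from rfl, show ksV12 1 = (0 : ℝ) from rfl, show ksV12 2 = (-Real.sqrt 2) from rfl, show ksV85 0 = Real.sqrt 2 from rfl, show ksV85 1 = (-3 : ℝ) from rfl, show ksV85 2 = (1 : ℝ) from rfl]
  norm_num
lemma ksO_12_86 : ksV12 0 * ksV86 0 + ksV12 1 * ksV86 1 + ksV12 2 * ksV86 2 = 0 := by
  simp only [show ksV12 0 = (1 : ℝ) from rfl, show ksV12 1 = (0 : ℝ) from rfl, show ksV12 2 = (-Real.sqrt 2) from rfl, show ksV86 0 = (-Real.sqrt 2) from rfl, show ksV86 1 = (-3 : ℝ) from rfl, show ksV86 2 = (-1 : ℝ) from rfl]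
  norm_num
lemma ksO_13_18 : ksV13 0 * ksV18 0 + ksV13 1 * ksV18 1 + ksV13 2 * ksV18 2 = 0 := by
  simp only [show ksV13 0 = (1 : ℝ) from rfl, show ksV13 1 = (1 : ℝ) from rfl, show ksV13 2 = (0 : ℝ) from rfl, show ksV18 0 = (1 : ℝ) from rfl, show ksV18 1 = (-1 : ℝ) from rfl, show ksV18 2 = (0 : ℝ) from rfl]
  norm_num
lemma ksO_13_21 : ksV13 0 * ksV21 0 + ksV13 1 * ksV21 1 + ksV13 2 * ksV21 2 = 0 := by
  simp only [show ksV13 0 = (1 : ℝ) from rfl, show ksV13 1 = (1 : ℝ) from rfl, show ksV13 2 = (0 : ℝ) from rfl, show ksV21 0 = (1 : ℝ) from rfl, show ksV21 1 = (-1 : ℝ) from rfl, show ksV21 2 = Real.sqrt 2 from rfl]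
  norm_num
lemma ksO_13_22 : ksV13 0 * ksV22 0 + ksV13 1 * ksV22 1 + ksV13 2 * ksV22 2 = 0 := by
  simp only [show ksV13 0 = (1 : ℝ) from rfl, show ksV13 1 = (1 : ℝ) from rfl, show ksV13 2 = (0 : ℝ) from rfl, show ksV22 0 = (1 : ℝ) from rfl, show ksV22 1 = (-1 : ℝ) from rfl, show ksV22 2 = (-Real.sqrt 2) from rfl]
  norm_num
lemma ksO_16_17 : ksV16 0 * ksV17 0 + ksV16 1 * ksV17 1 + ksV16 2 * ksV17 2 = 0 := by
  simp only [show ksV16 0 = (1 : ℝ) from rfl, show ksV16 1 = (1 : ℝ) from rfl, show ksV16 2 = Real.sqrt 2 from rfl, show ksV17 0 = (1 : ℝ) from rfl, show ksV17 1 = (1 : ℝ) from rfl, show ksV17 2 = (-Real.sqrt 2) from rfl]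
  linear_combination (-1 : ℝ) * ks_s2
lemma ksO_16_18 : ksV16 0 * ksV18 0 + ksV16 1 * ksV18 1 + ksV16 2 * ksV18 2 = 0 := by
  simp only [show ksV16 0 = (1 : ℝ) from rfl, show ksV16 1 = (1 : ℝ) from rfl, show ksV16 2 = Real.sqrt 2 from rfl, show ksV18 0 = (1 : ℝ) from rfl, show ksV18 1 = (-1 : ℝ) from rfl, show ksV18 2 = (0 : ℝ) from rfl]
  norm_num
lemma ksO_16_34 : ksV16 0 * ksV34 0 + ksV16 1 * ksV34 1 + ksV16 2 * ksV34 2 = 0 := by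
  simp only [show ksV16 0 = (1 : ℝ) from rfl, show ksV16 1 = (1 : ℝ) from rfl, show ksV16 2 = Real.sqrt 2 from rfl, show ksV34 0 = Real.sqrt 2 from rfl, show ksV34 1 = (0 : ℝ) from rfl, show ksV34 2 = (-1 : ℝ) from rfl]
  norm_num
lemma ksO_16_69 : ksV16 0 * ksV69 0 + ksV16 1 * ksV69 1 + ksV16 2 * ksV69 2 = 0 := by
  simp only [show ksV16 0 = (1 : ℝ) from rfl, show ksV16 1 = (1 : ℝ) from rfl, show ksV16 2 = Real.sqrt 2 from rfl, show ksV69 0 = (3 : ℝ) from rfl, show ksV69 1 = (-1 : ℝ) from rfl, show ksV69 2 = (-Real.sqrt 2) from rfl]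
  linear_combination (-1 : ℝ) * ks_s2
lemma ksO_16_95 : ksV16 0 * ksV95 0 + ksV16 1 * ksV95 1 + ksV16 2 * ksV95 2 = 0 := by
  simp only [show ksV16 0 = (1 : ℝ) from rfl, show ksV16 1 = (1 : ℝ) from rfl, show ksV16 2 = Real.sqrt 2 from rfl, show ksV95 0 = (-1 : ℝ) from rfl, show ksV95 1 = (3 : ℝ) from rfl, show ksV95 2 = (-Real.sqrt 2) from rfl]
  linear_combination (-1 : ℝ) * ks_s2
lemma ksO_17_18 : ksV17 0 * ksV18 0 + ksV17 1 * ksV18 1 + ksV17 2 * ksV18 2 = 0 := by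
  simp only [show ksV17 0 = (1 : ℝ) from rfl, show ksV17 1 = (1 : ℝ) from rfl, show ksV17 2 = (-Real.sqrt 2) from rfl, show ksV18 0 = (1 : ℝ) from rfl, show ksV18 1 = (-1 : ℝ) from rfl, show ksV18 2 = (0 : ℝ) from rfl]
  norm_num
lemma ksO_17_33 : ksV17 0 * ksV33 0 + ksV17 1 * ksV33 1 + ksV17 2 * ksV33 2 = 0 := by
  simp only [show ksV17 0 = (1 : ℝ) from rfl, show ksV17 1 = (1 : ℝ) from rfl, show ksV17 2 = (-Real.sqrt 2) from rfl, show ksV33 0 = Real.sqrt 2 from rfl, show ksV33 1 = (0 : ℝ) from rfl, show ksV33 2 = (1 : ℝ) from rfl]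
  norm_num
lemma ksO_17_65 : ksV17 0 * ksV65 0 + ksV17 1 * ksV65 1 + ksV17 2 * ksV65 2 = 0 := by
  simp only [show ksV17 0 = (1 : ℝ) from rfl, show ksV17 1 = (1 : ℝ) from rfl, show ksV17 2 = (-Real.sqrt 2) from rfl, show ksV65 0 = (-3 : ℝ) from rfl, show ksV65 1 = (1 : ℝ) from rfl, show ksV65 2 = (-Real.sqrt 2) from rfl]
  linear_combination (1 : ℝ) * ks_s2
lemma ksO_17_96 : ksV17 0 * ksV96 0 + ksV17 1 * ksV96 1 + ksV17 2 * ksV96 2 = 0 := by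
  simp only [show ksV17 0 = (1 : ℝ) from rfl, show ksV17 1 = (1 : ℝ) from rfl, show ksV17 2 = (-Real.sqrt 2) from rfl, show ksV96 0 = (1 : ℝ) from rfl, show ksV96 1 = (-3 : ℝ) from rfl, show ksV96 2 = (-Real.sqrt 2) from rfl]
  linear_combination (1 : ℝ) * ks_s2
lemma ksO_21_22 : ksV21 0 * ksV22 0 + ksV21 1 * ksV22 1 + ksV21 2 * ksV22 2 = 0 := by
  simp only [show ksV21 0 = (1 : ℝ) from rfl, show ksV21 1 = (-1 : ℝ) from rfl, show ksV21 2 = Real.sqrt 2 from rfl, show ksV22 0 = (1 : ℝ) from rfl, show ksV22 1 = (-1 : ℝ) from rfl, show ksV22 2 = (-Real.sqrt 2) from rfl]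
  linear_combination (-1 : ℝ) * ks_s2
lemma ksO_21_34 : ksV21 0 * ksV34 0 + ksV21 1 * ksV34 1 + ksV21 2 * ksV34 2 = 0 := by
  simp only [show ksV21 0 = (1 : ℝ) from rfl, show ksV21 1 = (-1 : ℝ) from rfl, show ksV21 2 = Real.sqrt 2 from rfl, show ksV34 0 = Real.sqrt 2 from rfl, show ksV34 1 = (0 : ℝ) from rfl, show ksV34 2 = (-1 : ℝ) from rfl]
  norm_num
lemma ksO_21_66 : ksV21 0 * ksV66 0 + ksV21 1 * ksV66 1 + ksV21 2 * ksV66 2 = 0 := by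
  simp only [show ksV21 0 = (1 : ℝ) from rfl, show ksV21 1 = (-1 : ℝ) from rfl, show ksV21 2 = Real.sqrt 2 from rfl, show ksV66 0 = (3 : ℝ) from rfl, show ksV66 1 = (1 : ℝ) from rfl, show ksV66 2 = (-Real.sqrt 2) from rfl]
  linear_combination (-1 : ℝ) * ks_s2
lemma ksO_21_99 : ksV21 0 * ksV99 0 + ksV21 1 * ksV99 1 + ksV21 2 * ksV99 2 = 0 := by
  simp only [show ksV21 0 = (1 : ℝ) from rfl, show ksV21 1 = (-1 : ℝ) from rfl, show ksV21 2 = Real.sqrt 2 from rfl, show ksV99 0 = (1 : ℝ) from rfl, show ksV99 1 = (3 : ℝ) from rfl, show ksV99 2 = Real.sqrt 2 from rfl]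
  linear_combination (1 : ℝ) * ks_s2
lemma ksO_22_33 : ksV22 0 * ksV33 0 + ksV22 1 * ksV33 1 + ksV22 2 * ksV33 2 = 0 := by
  simp only [show ksV22 0 = (1 : ℝ) from rfl, show ksV22 1 = (-1 : ℝ) from rfl, show ksV22 2 = (-Real.sqrt 2) from rfl, show ksV33 0 = Real.sqrt 2 from rfl, show ksV33 1 = (0 : ℝ) from rfl, show ksV33 2 = (1 : ℝ) from rfl]
  norm_num
lemma ksO_22_70 : ksV22 0 * ksV70 0 + ksV22 1 * ksV70 1 + ksV22 2 * ksV70 2 = 0 := by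
  simp only [show ksV22 0 = (1 : ℝ) from rfl, show ksV22 1 = (-1 : ℝ) from rfl, show ksV22 2 = (-Real.sqrt 2) from rfl, show ksV70 0 = (-3 : ℝ) from rfl, show ksV70 1 = (-1 : ℝ) from rfl, show ksV70 2 = (-Real.sqrt 2) from rfl]
  linear_combination (1 : ℝ) * ks_s2
lemma ksO_22_100 : ksV22 0 * ksV100 0 + ksV22 1 * ksV100 1 + ksV22 2 * ksV100 2 = 0 := by
  simp only [show ksV22 0 = (1 : ℝ) from rfl, show ksV22 1 = (-1 : ℝ) from rfl, show ksV22 2 = (-Real.sqrt 2) from rfl, show ksV100 0 = (-1 : ℝ) from rfl, show ksV100 1 = (-3 : ℝ) from rfl, show ksV100 2 = Real.sqrt 2 from rfl]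
  linear_combination (-1 : ℝ) * ks_s2
lemma ksO_23_40 : ksV23 0 * ksV40 0 + ksV23 1 * ksV40 1 + ksV23 2 * ksV40 2 = 0 := by
  simp only [show ksV23 0 = (1 : ℝ) from rfl, show ksV23 1 = Real.sqrt 2 from rfl, show ksV23 2 = (0 : ℝ) from rfl, show ksV40 0 = Real.sqrt 2 from rfl, show ksV40 1 = (-1 : ℝ) from rfl, show ksV40 2 = (0 : ℝ) from rfl]
  norm_num
lemma ksO_23_41 : ksV23 0 * ksV41 0 + ksV23 1 * ksV41 1 + ksV23 2 * ksV41 2 = 0 := by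
  simp only [show ksV23 0 = (1 : ℝ) from rfl, show ksV23 1 = Real.sqrt 2 from rfl, show ksV23 2 = (0 : ℝ) from rfl, show ksV41 0 = Real.sqrt 2 from rfl, show ksV41 1 = (-1 : ℝ) from rfl, show ksV41 2 = (1 : ℝ) from rfl]
  norm_num
lemma ksO_23_42 : ksV23 0 * ksV42 0 + ksV23 1 * ksV42 1 + ksV23 2 * ksV42 2 = 0 := by
  simp only [show ksV23 0 = (1 : ℝ) from rfl, show ksV23 1 = Real.sqrt 2 from rfl, show ksV23 2 = (0 : ℝ) from rfl, show ksV42 0 = Real.sqrt 2 from rfl, show ksV42 1 = (-1 : ℝ) from rfl, show ksV42 2 = (-1 : ℝ) from rfl]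
  norm_num
lemma ksO_23_101 : ksV23 0 * ksV101 0 + ksV23 1 * ksV101 1 + ksV23 2 * ksV101 2 = 0 := by
  simp only [show ksV23 0 = (1 : ℝ) from rfl, show ksV23 1 = Real.sqrt 2 from rfl, show ksV23 2 = (0 : ℝ) from rfl, show ksV101 0 = Real.sqrt 2 from rfl, show ksV101 1 = (-1 : ℝ) from rfl, show ksV101 2 = (-3 : ℝ) from rfl]
  norm_num
lemma ksO_23_102 : ksV23 0 * ksV102 0 + ksV23 1 * ksV102 1 + ksV23 2 * ksV102 2 = 0 := by
  simp only [show ksV23 0 = (1 : ℝ) from rfl, show ksV23 1 = Real.sqrt 2 from rfl, show ksV23 2 = (0 : ℝ) from rfl, show ksV102 0 = (-Real.sqrt 2) from rfl, show ksV102 1 = (1 : ℝ) from rfl, show ksV102 2 = (-3 : ℝ) from rfl]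
  norm_num
lemma ksO_24_29 : ksV24 0 * ksV29 0 + ksV24 1 * ksV29 1 + ksV24 2 * ksV29 2 = 0 := by
  simp only [show ksV24 0 = (1 : ℝ) from rfl, show ksV24 1 = Real.sqrt 2 from rfl, show ksV24 2 = (1 : ℝ) from rfl, show ksV29 0 = (1 : ℝ) from rfl, show ksV29 1 = (-Real.sqrt 2) from rfl, show ksV29 2 = (1 : ℝ) from rfl]
  linear_combination (-1 : ℝ) * ks_s2
lemma ksO_24_40 : ksV24 0 * ksV40 0 + ksV24 1 * ksV40 1 + ksV24 2 * ksV40 2 = 0 := by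
  simp only [show ksV24 0 = (1 : ℝ) from rfl, show ksV24 1 = Real.sqrt 2 from rfl, show ksV24 2 = (1 : ℝ) from rfl, show ksV40 0 = Real.sqrt 2 from rfl, show ksV40 1 = (-1 : ℝ) from rfl, show ksV40 2 = (0 : ℝ) from rfl]
  norm_num
lemma ksO_24_61 : ksV24 0 * ksV61 0 + ksV24 1 * ksV61 1 + ksV24 2 * ksV61 2 = 0 := by
  simp only [show ksV24 0 = (1 : ℝ) from rfl, show ksV24 1 = Real.sqrt 2 from rfl, show ksV24 2 = (1 : ℝ) from rfl, show ksV61 0 = (3 : ℝ) from rfl, show ksV61 1 = (-Real.sqrt 2) from rfl, show ksV61 2 = (-1 : ℝ) from rfl]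
  linear_combination (-1 : ℝ) * ks_s2
lemma ksO_24_105 : ksV24 0 * ksV105 0 + ksV24 1 * ksV105 1 + ksV24 2 * ksV105 2 = 0 := by
  simp only [show ksV24 0 = (1 : ℝ) from rfl, show ksV24 1 = Real.sqrt 2 from rfl, show ksV24 2 = (1 : ℝ) from rfl, show ksV105 0 = (1 : ℝ) from rfl, show ksV105 1 = Real.sqrt 2 from rfl, show ksV105 2 = (-3 : ℝ) from rfl]
  linear_combination (1 : ℝ) * ks_s2
lemma ksO_25_30 : ksV25 0 * ksV30 0 + ksV25 1 * ksV30 1 + ksV25 2 * ksV30 2 = 0 := by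
  simp only [show ksV25 0 = (1 : ℝ) from rfl, show ksV25 1 = Real.sqrt 2 from rfl, show ksV25 2 = (-1 : ℝ) from rfl, show ksV30 0 = (1 : ℝ) from rfl, show ksV30 1 = (-Real.sqrt 2) from rfl, show ksV30 2 = (-1 : ℝ) from rfl]
  linear_combination (-1 : ℝ) * ks_s2
lemma ksO_25_40 : ksV25 0 * ksV40 0 + ksV25 1 * ksV40 1 + ksV25 2 * ksV40 2 = 0 := by
  simp only [show ksV25 0 = (1 : ℝ) from rfl, show ksV25 1 = Real.sqrt 2 from rfl, show ksV25 2 = (-1 : ℝ) from rfl, show ksV40 0 = Real.sqrt 2 from rfl, show ksV40 1 = (-1 : ℝ) from rfl, show ksV40 2 = (0 : ℝ) from rfl]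
  norm_num
lemma ksO_25_57 : ksV25 0 * ksV57 0 + ksV25 1 * ksV57 1 + ksV25 2 * ksV57 2 = 0 := by
  simp only [show ksV25 0 = (1 : ℝ) from rfl, show ksV25 1 = Real.sqrt 2 from rfl, show ksV25 2 = (-1 : ℝ) from rfl, show ksV57 0 = (-3 : ℝ) from rfl, show ksV57 1 = Real.sqrt 2 from rfl, show ksV57 2 = (-1 : ℝ) from rfl]
  linear_combination (1 : ℝ) * ks_s2
lemma ksO_25_106 : ksV25 0 * ksV106 0 + ksV25 1 * ksV106 1 + ksV25 2 * ksV106 2 = 0 := by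
  simp only [show ksV25 0 = (1 : ℝ) from rfl, show ksV25 1 = Real.sqrt 2 from rfl, show ksV25 2 = (-1 : ℝ) from rfl, show ksV106 0 = (-1 : ℝ) from rfl, show ksV106 1 = (-Real.sqrt 2) from rfl, show ksV106 2 = (-3 : ℝ) from rfl]
  linear_combination (-1 : ℝ) * ks_s2
lemma ksO_28_35 : ksV28 0 * ksV35 0 + ksV28 1 * ksV35 1 + ksV28 2 * ksV35 2 = 0 := by
  simp only [show ksV28 0 = (1 : ℝ) from rfl, show ksV28 1 = (-Real.sqrt 2) from rfl, show ksV28 2 = (0 : ℝ) from rfl, show ksV35 0 = Real.sqrt 2 from rfl, show ksV35 1 = (1 : ℝ) from rfl, show ksV35 2 = (0 : ℝ) from rfl]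
  norm_num
lemma ksO_28_36 : ksV28 0 * ksV36 0 + ksV28 1 * ksV36 1 + ksV28 2 * ksV36 2 = 0 := by
  simp only [show ksV28 0 = (1 : ℝ) from rfl, show ksV28 1 = (-Real.sqrt 2) from rfl, show ksV28 2 = (0 : ℝ) from rfl, show ksV36 0 = Real.sqrt 2 from rfl, show ksV36 1 = (1 : ℝ) from rfl, show ksV36 2 = (1 : ℝ) from rfl]
  norm_num
lemma ksO_28_37 : ksV28 0 * ksV37 0 + ksV28 1 * ksV37 1 + ksV28 2 * ksV37 2 = 0 := by
  simp only [show ksV28 0 = (1 : ℝ) from rfl, show ksV28 1 = (-Real.sqrt 2) from rfl, show ksV28 2 = (0 : ℝ) from rfl, show ksV37 0 = Real.sqrt 2 from rfl, show ksV37 1 = (1 : ℝ) from rfl, show ksV37 2 = (-1 : ℝ) from rfl]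
  norm_num
lemma ksO_28_111 : ksV28 0 * ksV111 0 + ksV28 1 * ksV111 1 + ksV28 2 * ksV111 2 = 0 := by
  simp only [show ksV28 0 = (1 : ℝ) from rfl, show ksV28 1 = (-Real.sqrt 2) from rfl, show ksV28 2 = (0 : ℝ) from rfl, show ksV111 0 = (-Real.sqrt 2) from rfl, show ksV111 1 = (-1 : ℝ) from rfl, show ksV111 2 = (3 : ℝ) from rfl]
  norm_num
lemma ksO_28_112 : ksV28 0 * ksV112 0 + ksV28 1 * ksV112 1 + ksV28 2 * ksV112 2 = 0 := by
  simp only [show ksV28 0 = (1 : ℝ) from rfl, show ksV28 1 = (-Real.sqrt 2) from rfl, show ksV28 2 = (0 : ℝ) from rfl, show ksV112 0 = Real.sqrt 2 from rfl, show ksV112 1 = (1 : ℝ) from rfl, show ksV112 2 = (3 : ℝ) from rfl]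
  norm_num
lemma ksO_29_35 : ksV29 0 * ksV35 0 + ksV29 1 * ksV35 1 + ksV29 2 * ksV35 2 = 0 := by
  simp only [show ksV29 0 = (1 : ℝ) from rfl, show ksV29 1 = (-Real.sqrt 2) from rfl, show ksV29 2 = (1 : ℝ) from rfl, show ksV35 0 = Real.sqrt 2 from rfl, show ksV35 1 = (1 : ℝ) from rfl, show ksV35 2 = (0 : ℝ) from rfl]
  norm_num
lemma ksO_29_58 : ksV29 0 * ksV58 0 + ksV29 1 * ksV58 1 + ksV29 2 * ksV58 2 = 0 := by
  simp only [show ksV29 0 = (1 : ℝ) from rfl, show ksV29 1 = (-Real.sqrt 2) from rfl, show ksV29 2 = (1 : ℝ) from rfl, show ksV58 0 = (3 : ℝ) from rfl, show ksV58 1 = Real.sqrt 2 from rfl, show ksV58 2 = (-1 : ℝ) from rfl]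
  linear_combination (-1 : ℝ) * ks_s2
lemma ksO_29_115 : ksV29 0 * ksV115 0 + ksV29 1 * ksV115 1 + ksV29 2 * ksV115 2 = 0 := by
  simp only [show ksV29 0 = (1 : ℝ) from rfl, show ksV29 1 = (-Real.sqrt 2) from rfl, show ksV29 2 = (1 : ℝ) from rfl, show ksV115 0 = (-1 : ℝ) from rfl, show ksV115 1 = Real.sqrt 2 from rfl, show ksV115 2 = (3 : ℝ) from rfl]
  linear_combination (-1 : ℝ) * ks_s2
lemma ksO_30_35 : ksV30 0 * ksV35 0 + ksV30 1 * ksV35 1 + ksV30 2 * ksV35 2 = 0 := by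
  simp only [show ksV30 0 = (1 : ℝ) from rfl, show ksV30 1 = (-Real.sqrt 2) from rfl, show ksV30 2 = (-1 : ℝ) from rfl, show ksV35 0 = Real.sqrt 2 from rfl, show ksV35 1 = (1 : ℝ) from rfl, show ksV35 2 = (0 : ℝ) from rfl]
  norm_num
lemma ksO_30_62 : ksV30 0 * ksV62 0 + ksV30 1 * ksV62 1 + ksV30 2 * ksV62 2 = 0 := by
  simp only [show ksV30 0 = (1 : ℝ) from rfl, show ksV30 1 = (-Real.sqrt 2) from rfl, show ksV30 2 = (-1 : ℝ) from rfl, show ksV62 0 = (-3 : ℝ) from rfl, show ksV62 1 = (-Real.sqrt 2) from rfl, show ksV62 2 = (-1 : ℝ) from rfl]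
  linear_combination (1 : ℝ) * ks_s2
lemma ksO_30_116 : ksV30 0 * ksV116 0 + ksV30 1 * ksV116 1 + ksV30 2 * ksV116 2 = 0 := by
  simp only [show ksV30 0 = (1 : ℝ) from rfl, show ksV30 1 = (-Real.sqrt 2) from rfl, show ksV30 2 = (-1 : ℝ) from rfl, show ksV116 0 = (1 : ℝ) from rfl, show ksV116 1 = (-Real.sqrt 2) from rfl, show ksV116 2 = (3 : ℝ) from rfl]
  linear_combination (1 : ℝ) * ks_s2
lemma ksO_33_96 : ksV33 0 * ksV96 0 + ksV33 1 * ksV96 1 + ksV33 2 * ksV96 2 = 0 := by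
  simp only [show ksV33 0 = Real.sqrt 2 from rfl, show ksV33 1 = (0 : ℝ) from rfl, show ksV33 2 = (1 : ℝ) from rfl, show ksV96 0 = (1 : ℝ) from rfl, show ksV96 1 = (-3 : ℝ) from rfl, show ksV96 2 = (-Real.sqrt 2) from rfl]
  norm_num
lemma ksO_33_100 : ksV33 0 * ksV100 0 + ksV33 1 * ksV100 1 + ksV33 2 * ksV100 2 = 0 := by
  simp only [show ksV33 0 = Real.sqrt 2 from rfl, show ksV33 1 = (0 : ℝ) from rfl, show ksV33 2 = (1 : ℝ) from rfl, show ksV100 0 = (-1 : ℝ) from rfl, show ksV100 1 = (-3 : ℝ) from rfl, show ksV100 2 = Real.sqrt 2 from rfl]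
  norm_num
lemma ksO_34_95 : ksV34 0 * ksV95 0 + ksV34 1 * ksV95 1 + ksV34 2 * ksV95 2 = 0 := by
  simp only [show ksV34 0 = Real.sqrt 2 from rfl, show ksV34 1 = (0 : ℝ) from rfl, show ksV34 2 = (-1 : ℝ) from rfl, show ksV95 0 = (-1 : ℝ) from rfl, show ksV95 1 = (3 : ℝ) from rfl, show ksV95 2 = (-Real.sqrt 2) from rfl]
  norm_num
lemma ksO_34_99 : ksV34 0 * ksV99 0 + ksV34 1 * ksV99 1 + ksV34 2 * ksV99 2 = 0 := by
  simp only [show ksV34 0 = Real.sqrt 2 from rfl, show ksV34 1 = (0 : ℝ) from rfl, show ksV34 2 = (-1 : ℝ) from rfl, show ksV99 0 = (1 : ℝ) from rfl, show ksV99 1 = (3 : ℝ) from rfl, show ksV99 2 = Real.sqrt 2 from rfl]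
  norm_num
lemma ksO_35_115 : ksV35 0 * ksV115 0 + ksV35 1 * ksV115 1 + ksV35 2 * ksV115 2 = 0 := by
  simp only [show ksV35 0 = Real.sqrt 2 from rfl, show ksV35 1 = (1 : ℝ) from rfl, show ksV35 2 = (0 : ℝ) from rfl, show ksV115 0 = (-1 : ℝ) from rfl, show ksV115 1 = Real.sqrt 2 from rfl, show ksV115 2 = (3 : ℝ) from rfl]
  norm_num
lemma ksO_35_116 : ksV35 0 * ksV116 0 + ksV35 1 * ksV116 1 + ksV35 2 * ksV116 2 = 0 := by
  simp only [show ksV35 0 = Real.sqrt 2 from rfl, show ksV35 1 = (1 : ℝ) from rfl, show ksV35 2 = (0 : ℝ) from rfl, show ksV116 0 = (1 : ℝ) from rfl, show ksV116 1 = (-Real.sqrt 2) from rfl, show ksV116 2 = (3 : ℝ) from rfl]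
  norm_num
lemma ksO_36_42 : ksV36 0 * ksV42 0 + ksV36 1 * ksV42 1 + ksV36 2 * ksV42 2 = 0 := by
  simp only [show ksV36 0 = Real.sqrt 2 from rfl, show ksV36 1 = (1 : ℝ) from rfl, show ksV36 2 = (1 : ℝ) from rfl, show ksV42 0 = Real.sqrt 2 from rfl, show ksV42 1 = (-1 : ℝ) from rfl, show ksV42 2 = (-1 : ℝ) from rfl]
  linear_combination (1 : ℝ) * ks_s2
lemma ksO_36_85 : ksV36 0 * ksV85 0 + ksV36 1 * ksV85 1 + ksV36 2 * ksV85 2 = 0 := by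
  simp only [show ksV36 0 = Real.sqrt 2 from rfl, show ksV36 1 = (1 : ℝ) from rfl, show ksV36 2 = (1 : ℝ) from rfl, show ksV85 0 = Real.sqrt 2 from rfl, show ksV85 1 = (-3 : ℝ) from rfl, show ksV85 2 = (1 : ℝ) from rfl]
  linear_combination (1 : ℝ) * ks_s2
lemma ksO_36_111 : ksV36 0 * ksV111 0 + ksV36 1 * ksV111 1 + ksV36 2 * ksV111 2 = 0 := by
  simp only [show ksV36 0 = Real.sqrt 2 from rfl, show ksV36 1 = (1 : ℝ) from rfl, show ksV36 2 = (1 : ℝ) from rfl, show ksV111 0 = (-Real.sqrt 2) from rfl, show ksV111 1 = (-1 : ℝ) from rfl, show ksV111 2 = (3 : ℝ) from rfl]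
  linear_combination (-1 : ℝ) * ks_s2
lemma ksO_37_41 : ksV37 0 * ksV41 0 + ksV37 1 * ksV41 1 + ksV37 2 * ksV41 2 = 0 := by
  simp only [show ksV37 0 = Real.sqrt 2 from rfl, show ksV37 1 = (1 : ℝ) from rfl, show ksV37 2 = (-1 : ℝ) from rfl, show ksV41 0 = Real.sqrt 2 from rfl, show ksV41 1 = (-1 : ℝ) from rfl, show ksV41 2 = (1 : ℝ) from rfl]
  linear_combination (1 : ℝ) * ks_s2
lemma ksO_37_81 : ksV37 0 * ksV81 0 + ksV37 1 * ksV81 1 + ksV37 2 * ksV81 2 = 0 := by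
  simp only [show ksV37 0 = Real.sqrt 2 from rfl, show ksV37 1 = (1 : ℝ) from rfl, show ksV37 2 = (-1 : ℝ) from rfl, show ksV81 0 = (-Real.sqrt 2) from rfl, show ksV81 1 = (3 : ℝ) from rfl, show ksV81 2 = (1 : ℝ) from rfl]
  linear_combination (-1 : ℝ) * ks_s2
lemma ksO_37_112 : ksV37 0 * ksV112 0 + ksV37 1 * ksV112 1 + ksV37 2 * ksV112 2 = 0 := by
  simp only [show ksV37 0 = Real.sqrt 2 from rfl, show ksV37 1 = (1 : ℝ) from rfl, show ksV37 2 = (-1 : ℝ) from rfl, show ksV112 0 = Real.sqrt 2 from rfl, show ksV112 1 = (1 : ℝ) from rfl, show ksV112 2 = (3 : ℝ) from rfl]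
  linear_combination (1 : ℝ) * ks_s2
lemma ksO_40_105 : ksV40 0 * ksV105 0 + ksV40 1 * ksV105 1 + ksV40 2 * ksV105 2 = 0 := by
  simp only [show ksV40 0 = Real.sqrt 2 from rfl, show ksV40 1 = (-1 : ℝ) from rfl, show ksV40 2 = (0 : ℝ) from rfl, show ksV105 0 = (1 : ℝ) from rfl, show ksV105 1 = Real.sqrt 2 from rfl, show ksV105 2 = (-3 : ℝ) from rfl]
  norm_num
lemma ksO_40_106 : ksV40 0 * ksV106 0 + ksV40 1 * ksV106 1 + ksV40 2 * ksV106 2 = 0 := by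
  simp only [show ksV40 0 = Real.sqrt 2 from rfl, show ksV40 1 = (-1 : ℝ) from rfl, show ksV40 2 = (0 : ℝ) from rfl, show ksV106 0 = (-1 : ℝ) from rfl, show ksV106 1 = (-Real.sqrt 2) from rfl, show ksV106 2 = (-3 : ℝ) from rfl]
  norm_num
lemma ksO_41_86 : ksV41 0 * ksV86 0 + ksV41 1 * ksV86 1 + ksV41 2 * ksV86 2 = 0 := by
  simp only [show ksV41 0 = Real.sqrt 2 from rfl, show ksV41 1 = (-1 : ℝ) from rfl, show ksV41 2 = (1 : ℝ) from rfl, show ksV86 0 = (-Real.sqrt 2) from rfl, show ksV86 1 = (-3 : ℝ) from rfl, show ksV86 2 = (-1 : ℝ) from rfl]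
  linear_combination (-1 : ℝ) * ks_s2
lemma ksO_41_101 : ksV41 0 * ksV101 0 + ksV41 1 * ksV101 1 + ksV41 2 * ksV101 2 = 0 := by
  simp only [show ksV41 0 = Real.sqrt 2 from rfl, show ksV41 1 = (-1 : ℝ) from rfl, show ksV41 2 = (1 : ℝ) from rfl, show ksV101 0 = Real.sqrt 2 from rfl, show ksV101 1 = (-1 : ℝ) from rfl, show ksV101 2 = (-3 : ℝ) from rfl]
  linear_combination (1 : ℝ) * ks_s2
lemma ksO_42_82 : ksV42 0 * ksV82 0 + ksV42 1 * ksV82 1 + ksV42 2 * ksV82 2 = 0 := by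
  simp only [show ksV42 0 = Real.sqrt 2 from rfl, show ksV42 1 = (-1 : ℝ) from rfl, show ksV42 2 = (-1 : ℝ) from rfl, show ksV82 0 = Real.sqrt 2 from rfl, show ksV82 1 = (3 : ℝ) from rfl, show ksV82 2 = (-1 : ℝ) from rfl]
  linear_combination (1 : ℝ) * ks_s2
lemma ksO_42_102 : ksV42 0 * ksV102 0 + ksV42 1 * ksV102 1 + ksV42 2 * ksV102 2 = 0 := by
  simp only [show ksV42 0 = Real.sqrt 2 from rfl, show ksV42 1 = (-1 : ℝ) from rfl, show ksV42 2 = (-1 : ℝ) from rfl, show ksV102 0 = (-Real.sqrt 2) from rfl, show ksV102 1 = (1 : ℝ) from rfl, show ksV102 2 = (-3 : ℝ) from rfl]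
  linear_combination (-1 : ℝ) * ks_s2
end KSvectors

private lemma ks_z01 {a b c : ℕ} (t : a + b + c = 1) (h : a = 1) : b = 0 := by omega
private lemma ks_z02 {a b c : ℕ} (t : a + b + c = 1) (h : a = 1) : c = 0 := by omega
private lemma ks_z10 {a b c : ℕ} (t : a + b + c = 1) (h : b = 1) : a = 0 := by omega
private lemma ks_z12 {a b c : ℕ} (t : a + b + c = 1) (h : b = 1) : c = 0 := by omega
private lemma ks_z20 {a b c : ℕ} (t : a + b + c = 1) (h : c = 1) : a = 0 := by omega
private lemma ks_z21 {a b c : ℕ} (t : a + b + c = 1) (h : c = 1) : b = 0 := by omega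
private lemma ks_o0 {a b c : ℕ} (t : a + b + c = 1) (hb : b = 0) (hc : c = 0) : a = 1 := by omega
private lemma ks_o1 {a b c : ℕ} (t : a + b + c = 1) (ha : a = 0) (hc : c = 0) : b = 1 := by omega
private lemma ks_o2 {a b c : ℕ} (t : a + b + c = 1) (ha : a = 0) (hb : b = 0) : c = 1 := by omega
private lemma ks_c01 {a b c : ℕ} (t : a + b + c = 1) (ha : a = 1) (hb : b = 1) : False := by omega
private lemma ks_c02 {a b c : ℕ} (t : a + b + c = 1) (ha : a = 1) (hc : c = 1) : False := by omega
private lemma ks_c12 {a b c : ℕ} (t : a + b + c = 1) (hb : b = 1) (hc : c = 1) : False := by omega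
private lemma ks_c000 {a b c : ℕ} (t : a + b + c = 1) (ha : a = 0) (hb : b = 0) (hc : c = 0) : False := by omega
private lemma ks_br0 {a b c : ℕ} (t : a + b + c = 1) : a = 0 ∨ a = 1 := by omega
private lemma ks_br1 {a b c : ℕ} (t : a + b + c = 1) : b = 0 ∨ b = 1 := by omega
private lemma ks_br2 {a b c : ℕ} (t : a + b + c = 1) : c = 0 ∨ c = 1 := by omega

set_option maxHeartbeats 1000000 in
lemma ks_core {d : ℕ} (f : EuclideanSpace ℝ (Fin d) → ℕ)
    (hbasis : ∀ b : OrthonormalBasis (Fin d) ℝ (EuclideanSpace ℝ (Fin d)), ∑ i, f (b i) = 1)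
    (a b c : Fin d) (hab : a ≠ b) (hac : a ≠ c) (hbc : b ≠ c)
    (h0 : ∀ i : Fin d, i ≠ a → i ≠ b → i ≠ c → f (EuclideanSpace.single i (1:ℝ)) = 0) :
    False := by
  have t0 := ks_triad f hbasis a b c hab hac hbc h0 ksV0 ksV1 ksV8 ksV0_pos ksV1_pos ksV8_pos ksO_0_1 ksO_0_8 ksO_1_8
  have t1 := ks_triad f hbasis a b c hab hac hbc h0 ksV0 ksV13 ksV18 ksV0_pos ksV13_pos ksV18_pos ksO_0_13 ksO_0_18 ksO_13_18
  have t2 := ks_triad f hbasis a b c hab hac hbc h0 ksV0 ksV23 ksV40 ksV0_pos ksV23_pos ksV40_pos ksO_0_23 ksO_0_40 ksO_23_40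
  have t3 := ks_triad f hbasis a b c hab hac hbc h0 ksV0 ksV28 ksV35 ksV0_pos ksV28_pos ksV35_pos ksO_0_28 ksO_0_35 ksO_28_35
  have t4 := ks_triad f hbasis a b c hab hac hbc h0 ksV1 ksV9 ksV10 ksV1_pos ksV9_pos ksV10_pos ksO_1_9 ksO_1_10 ksO_9_10
  have t5 := ks_triad f hbasis a b c hab hac hbc h0 ksV1 ksV11 ksV34 ksV1_pos ksV11_pos ksV34_pos ksO_1_11 ksO_1_34 ksO_11_34
  have t6 := ks_triad f hbasis a b c hab hac hbc h0 ksV1 ksV12 ksV33 ksV1_pos ksV12_pos ksV33_pos ksO_1_12 ksO_1_33 ksO_12_33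
  have t7 := ks_triad f hbasis a b c hab hac hbc h0 ksV2 ksV3 ksV8 ksV2_pos ksV3_pos ksV8_pos ksO_2_3 ksO_2_8 ksO_3_8
  have t8 := ks_triad f hbasis a b c hab hac hbc h0 ksV2 ksV37 ksV41 ksV2_pos ksV37_pos ksV41_pos ksO_2_37 ksO_2_41 ksO_37_41
  have t9 := ks_triad f hbasis a b c hab hac hbc h0 ksV3 ksV36 ksV42 ksV3_pos ksV36_pos ksV42_pos ksO_3_36 ksO_3_42 ksO_36_42
  have t10 := ks_triad f hbasis a b c hab hac hbc h0 ksV4 ksV7 ksV8 ksV4_pos ksV7_pos ksV8_pos ksO_4_7 ksO_4_8 ksO_7_8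
  have t11 := ks_triad f hbasis a b c hab hac hbc h0 ksV5 ksV6 ksV8 ksV5_pos ksV6_pos ksV8_pos ksO_5_6 ksO_5_8 ksO_6_8
  have t12 := ks_triad f hbasis a b c hab hac hbc h0 ksV9 ksV25 ksV30 ksV9_pos ksV25_pos ksV30_pos ksO_9_25 ksO_9_30 ksO_25_30
  have t13 := ks_triad f hbasis a b c hab hac hbc h0 ksV10 ksV24 ksV29 ksV10_pos ksV24_pos ksV29_pos ksO_10_24 ksO_10_29 ksO_24_29
  have t14 := ks_triad f hbasis a b c hab hac hbc h0 ksV13 ksV21 ksV22 ksV13_pos ksV21_pos ksV22_pos ksO_13_21 ksO_13_22 ksO_21_22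
  have t15 := ks_triad f hbasis a b c hab hac hbc h0 ksV16 ksV17 ksV18 ksV16_pos ksV17_pos ksV18_pos ksO_16_17 ksO_16_18 ksO_17_18
  have t16 := ks_triad f hbasis a b c hab hac hbc h0 ksV4 ksV25 ksV57 ksV4_pos ksV25_pos ksV57_pos ksO_4_25 ksO_4_57 ksO_25_57
  have t17 := ks_triad f hbasis a b c hab hac hbc h0 ksV4 ksV29 ksV58 ksV4_pos ksV29_pos ksV58_pos ksO_4_29 ksO_4_58 ksO_29_58
  have t18 := ks_triad f hbasis a b c hab hac hbc h0 ksV5 ksV24 ksV61 ksV5_pos ksV24_pos ksV61_pos ksO_5_24 ksO_5_61 ksO_24_61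
  have t19 := ks_triad f hbasis a b c hab hac hbc h0 ksV5 ksV30 ksV62 ksV5_pos ksV30_pos ksV62_pos ksO_5_30 ksO_5_62 ksO_30_62
  have t20 := ks_triad f hbasis a b c hab hac hbc h0 ksV6 ksV17 ksV65 ksV6_pos ksV17_pos ksV65_pos ksO_6_17 ksO_6_65 ksO_17_65
  have t21 := ks_triad f hbasis a b c hab hac hbc h0 ksV6 ksV21 ksV66 ksV6_pos ksV21_pos ksV66_pos ksO_6_21 ksO_6_66 ksO_21_66
  have t22 := ks_triad f hbasis a b c hab hac hbc h0 ksV7 ksV16 ksV69 ksV7_pos ksV16_pos ksV69_pos ksO_7_16 ksO_7_69 ksO_16_69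
  have t23 := ks_triad f hbasis a b c hab hac hbc h0 ksV7 ksV22 ksV70 ksV7_pos ksV22_pos ksV70_pos ksO_7_22 ksO_7_70 ksO_22_70
  have t24 := ks_triad f hbasis a b c hab hac hbc h0 ksV11 ksV37 ksV81 ksV11_pos ksV37_pos ksV81_pos ksO_11_37 ksO_11_81 ksO_37_81
  have t25 := ks_triad f hbasis a b c hab hac hbc h0 ksV11 ksV42 ksV82 ksV11_pos ksV42_pos ksV82_pos ksO_11_42 ksO_11_82 ksO_42_82
  have t26 := ks_triad f hbasis a b c hab hac hbc h0 ksV12 ksV36 ksV85 ksV12_pos ksV36_pos ksV85_pos ksO_12_36 ksO_12_85 ksO_36_85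
  have t27 := ks_triad f hbasis a b c hab hac hbc h0 ksV12 ksV41 ksV86 ksV12_pos ksV41_pos ksV86_pos ksO_12_41 ksO_12_86 ksO_41_86
  have t28 := ks_triad f hbasis a b c hab hac hbc h0 ksV16 ksV34 ksV95 ksV16_pos ksV34_pos ksV95_pos ksO_16_34 ksO_16_95 ksO_34_95
  have t29 := ks_triad f hbasis a b c hab hac hbc h0 ksV17 ksV33 ksV96 ksV17_pos ksV33_pos ksV96_pos ksO_17_33 ksO_17_96 ksO_33_96
  have t30 := ks_triad f hbasis a b c hab hac hbc h0 ksV21 ksV34 ksV99 ksV21_pos ksV34_pos ksV99_pos ksO_21_34 ksO_21_99 ksO_34_99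
  have t31 := ks_triad f hbasis a b c hab hac hbc h0 ksV22 ksV33 ksV100 ksV22_pos ksV33_pos ksV100_pos ksO_22_33 ksO_22_100 ksO_33_100
  have t32 := ks_triad f hbasis a b c hab hac hbc h0 ksV23 ksV41 ksV101 ksV23_pos ksV41_pos ksV101_pos ksO_23_41 ksO_23_101 ksO_41_101
  have t33 := ks_triad f hbasis a b c hab hac hbc h0 ksV23 ksV42 ksV102 ksV23_pos ksV42_pos ksV102_pos ksO_23_42 ksO_23_102 ksO_42_102
  have t34 := ks_triad f hbasis a b c hab hac hbc h0 ksV24 ksV40 ksV105 ksV24_pos ksV40_pos ksV105_pos ksO_24_40 ksO_24_105 ksO_40_105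
  have t35 := ks_triad f hbasis a b c hab hac hbc h0 ksV25 ksV40 ksV106 ksV25_pos ksV40_pos ksV106_pos ksO_25_40 ksO_25_106 ksO_40_106
  have t36 := ks_triad f hbasis a b c hab hac hbc h0 ksV28 ksV36 ksV111 ksV28_pos ksV36_pos ksV111_pos ksO_28_36 ksO_28_111 ksO_36_111
  have t37 := ks_triad f hbasis a b c hab hac hbc h0 ksV28 ksV37 ksV112 ksV28_pos ksV37_pos ksV112_pos ksO_28_37 ksO_28_112 ksO_37_112
  have t38 := ks_triad f hbasis a b c hab hac hbc h0 ksV29 ksV35 ksV115 ksV29_pos ksV35_pos ksV115_pos ksO_29_35 ksO_29_115 ksO_35_115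
  have t39 := ks_triad f hbasis a b c hab hac hbc h0 ksV30 ksV35 ksV116 ksV30_pos ksV35_pos ksV116_pos ksO_30_35 ksO_30_116 ksO_35_116
  rcases ks_br0 t0 with h1 | h1
  · rcases ks_br1 t0 with h2 | h2
    · have h3 := ks_o2 t0 h1 h2
      have h4 := ks_z20 t7 h3
      have h5 := ks_z21 t7 h3
      have h6 := ks_z20 t10 h3
      have h7 := ks_z21 t10 h3
      have h8 := ks_z20 t11 h3
      have h9 := ks_z21 t11 h3
      rcases ks_br1 t5 with h10 | h10
      · have h11 := ks_o2 t5 h2 h10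
        have h12 := ks_z10 t28 h11
        have h13 := ks_z12 t28 h11
        have h14 := ks_z10 t30 h11
        have h15 := ks_z12 t30 h11
        have h16 := ks_o2 t21 h9 h14
        have h17 := ks_o2 t22 h7 h12
        rcases ks_br1 t15 with h18 | h18
        · have h19 := ks_o2 t15 h12 h18
          have h20 := ks_o2 t20 h9 h18
          have h21 := ks_z21 t1 h19
          have h22 := ks_o2 t14 h21 h14
          have h23 := ks_z12 t23 h22
          have h24 := ks_z01 t31 h22
          have h25 := ks_z02 t31 h22
          have h26 := ks_o1 t6 h2 h24
          have h27 := ks_z01 t26 h26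
          have h28 := ks_z02 t26 h26
          have h29 := ks_z01 t27 h26
          have h30 := ks_z02 t27 h26
          have h31 := ks_o2 t29 h18 h24
          have h32 := ks_o1 t8 h4 h29
          have h33 := ks_o2 t9 h5 h27
          have h34 := ks_z12 t24 h32
          have h35 := ks_z12 t25 h33
          have h36 := ks_z10 t33 h33
          have h37 := ks_z12 t33 h33
          have h38 := ks_z10 t37 h32
          have h39 := ks_z12 t37 h32
          have h40 := ks_o2 t2 h1 h36
          have h41 := ks_o2 t3 h1 h38
          have h42 := ks_o2 t32 h36 h29
          have h43 := ks_z10 t34 h40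
          have h44 := ks_z12 t34 h40
          have h45 := ks_z10 t35 h40
          have h46 := ks_z12 t35 h40
          have h47 := ks_o2 t36 h38 h27
          have h48 := ks_z10 t38 h41
          have h49 := ks_z12 t38 h41
          have h50 := ks_z10 t39 h41
          have h51 := ks_z12 t39 h41
          have h52 := ks_o0 t12 h45 h50
          have h53 := ks_o0 t13 h43 h48
          have h54 := ks_o2 t16 h6 h45
          have h55 := ks_o2 t17 h6 h48
          have h56 := ks_o2 t18 h8 h43
          have h57 := ks_o2 t19 h8 h50
          exact ks_c12 t4 h52 h53
        · have h58 := ks_z12 t15 h18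
          have h59 := ks_z12 t20 h18
          have h60 := ks_z01 t29 h18
          have h61 := ks_z02 t29 h18
          have h62 := ks_o1 t1 h1 h58
          have h63 := ks_o1 t6 h2 h60
          have h64 := ks_z02 t14 h62
          have h65 := ks_o2 t23 h7 h64
          have h66 := ks_z01 t26 h63
          have h67 := ks_z02 t26 h63
          have h68 := ks_z01 t27 h63
          have h69 := ks_z02 t27 h63
          have h70 := ks_o2 t31 h64 h60
          have h71 := ks_o1 t8 h4 h68
          have h72 := ks_o2 t9 h5 h66
          have h73 := ks_z12 t24 h71
          have h74 := ks_z12 t25 h72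
          have h75 := ks_z10 t33 h72
          have h76 := ks_z12 t33 h72
          have h77 := ks_z10 t37 h71
          have h78 := ks_z12 t37 h71
          have h79 := ks_o2 t2 h1 h75
          have h80 := ks_o2 t3 h1 h77
          have h81 := ks_o2 t32 h75 h68
          have h82 := ks_z10 t34 h79
          have h83 := ks_z12 t34 h79
          have h84 := ks_z10 t35 h79
          have h85 := ks_z12 t35 h79
          have h86 := ks_o2 t36 h77 h66
          have h87 := ks_z10 t38 h80
          have h88 := ks_z12 t38 h80
          have h89 := ks_z10 t39 h80
          have h90 := ks_z12 t39 h80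
          have h91 := ks_o0 t12 h84 h89
          have h92 := ks_o0 t13 h82 h87
          have h93 := ks_o2 t16 h6 h84
          have h94 := ks_o2 t17 h6 h87
          have h95 := ks_o2 t18 h8 h82
          have h96 := ks_o2 t19 h8 h89
          exact ks_c12 t4 h91 h92
      · have h97 := ks_z12 t5 h10
        have h98 := ks_z01 t24 h10
        have h99 := ks_z02 t24 h10
        have h100 := ks_z01 t25 h10
        have h101 := ks_z02 t25 h10
        have h102 := ks_o2 t8 h4 h98
        have h103 := ks_o1 t9 h5 h100
        have h104 := ks_z10 t26 h103
        have h105 := ks_z12 t26 h103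
        have h106 := ks_z12 t27 h102
        have h107 := ks_z10 t32 h102
        have h108 := ks_z12 t32 h102
        have h109 := ks_o2 t33 h107 h100
        have h110 := ks_z10 t36 h103
        have h111 := ks_z12 t36 h103
        have h112 := ks_o2 t37 h110 h98
        have h113 := ks_o2 t2 h1 h107
        have h114 := ks_o2 t3 h1 h110
        have h115 := ks_o2 t6 h2 h104
        have h116 := ks_z10 t29 h115
        have h117 := ks_z12 t29 h115
        have h118 := ks_z10 t31 h115
        have h119 := ks_z12 t31 h115
        have h120 := ks_z10 t34 h113
        have h121 := ks_z12 t34 h113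
        have h122 := ks_z10 t35 h113
        have h123 := ks_z12 t35 h113
        have h124 := ks_z10 t38 h114
        have h125 := ks_z12 t38 h114
        have h126 := ks_z10 t39 h114
        have h127 := ks_z12 t39 h114
        have h128 := ks_o0 t12 h122 h126
        have h129 := ks_o0 t13 h120 h124
        have h130 := ks_o2 t16 h6 h122
        have h131 := ks_o2 t17 h6 h124
        have h132 := ks_o2 t18 h8 h120
        have h133 := ks_o2 t19 h8 h126
        have h134 := ks_o2 t20 h9 h116
        have h135 := ks_o2 t23 h7 h118
        exact ks_c12 t4 h128 h129
    · have h136 := ks_z12 t0 h2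
      have h137 := ks_z01 t4 h2
      have h138 := ks_z02 t4 h2
      have h139 := ks_z01 t5 h2
      have h140 := ks_z02 t5 h2
      have h141 := ks_z01 t6 h2
      have h142 := ks_z02 t6 h2
      rcases ks_br0 t10 with h143 | h143
      · have h144 := ks_o1 t10 h143 h136
        have h145 := ks_z01 t22 h144
        have h146 := ks_z02 t22 h144
        have h147 := ks_z01 t23 h144
        have h148 := ks_z02 t23 h144
        have h149 := ks_o2 t28 h145 h140
        have h150 := ks_o2 t31 h147 h142
        rcases ks_br1 t15 with h151 | h151
        · have h152 := ks_o2 t15 h145 h151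
          have h153 := ks_o2 t29 h151 h142
          have h154 := ks_z21 t1 h152
          have h155 := ks_o1 t14 h154 h147
          have h156 := ks_z10 t21 h155
          have h157 := ks_z12 t21 h155
          have h158 := ks_z02 t30 h155
          have h159 := ks_o0 t11 h156 h136
          have h160 := ks_z01 t18 h159
          have h161 := ks_z02 t18 h159
          have h162 := ks_z01 t19 h159
          have h163 := ks_z02 t19 h159
          have h164 := ks_o2 t20 h156 h151
          have h165 := ks_o1 t12 h137 h162
          have h166 := ks_o2 t13 h138 h160
          have h167 := ks_z12 t16 h165
          have h168 := ks_z12 t17 h166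
          have h169 := ks_z01 t35 h165
          have h170 := ks_z02 t35 h165
          have h171 := ks_z01 t38 h166
          have h172 := ks_z02 t38 h166
          have h173 := ks_o2 t39 h162 h171
          have h174 := ks_o1 t2 h1 h169
          have h175 := ks_o1 t3 h1 h171
          have h176 := ks_z01 t32 h174
          have h177 := ks_z02 t32 h174
          have h178 := ks_z01 t33 h174
          have h179 := ks_z02 t33 h174
          have h180 := ks_o2 t34 h160 h169
          have h181 := ks_z01 t36 h175
          have h182 := ks_z02 t36 h175
          have h183 := ks_z01 t37 h175
          have h184 := ks_z02 t37 h175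
          have h185 := ks_o0 t8 h183 h176
          have h186 := ks_o0 t9 h181 h178
          have h187 := ks_o2 t24 h139 h183
          have h188 := ks_o2 t25 h139 h178
          have h189 := ks_o2 t26 h141 h181
          have h190 := ks_o2 t27 h141 h176
          exact ks_c01 t7 h185 h186
        · have h191 := ks_z12 t15 h151
          have h192 := ks_z10 t20 h151
          have h193 := ks_z12 t20 h151
          have h194 := ks_z02 t29 h151
          have h195 := ks_o1 t1 h1 h191
          have h196 := ks_o0 t11 h192 h136
          have h197 := ks_z01 t14 h195
          have h198 := ks_z01 t18 h196
          have h199 := ks_z02 t18 h196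
          have h200 := ks_z01 t19 h196
          have h201 := ks_z02 t19 h196
          have h202 := ks_o2 t21 h192 h197
          have h203 := ks_o2 t30 h197 h140
          have h204 := ks_o1 t12 h137 h200
          have h205 := ks_o2 t13 h138 h198
          have h206 := ks_z12 t16 h204
          have h207 := ks_z12 t17 h205
          have h208 := ks_z01 t35 h204
          have h209 := ks_z02 t35 h204
          have h210 := ks_z01 t38 h205
          have h211 := ks_z02 t38 h205
          have h212 := ks_o2 t39 h200 h210
          have h213 := ks_o1 t2 h1 h208
          have h214 := ks_o1 t3 h1 h210
          have h215 := ks_z01 t32 h213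
          have h216 := ks_z02 t32 h213
          have h217 := ks_z01 t33 h213
          have h218 := ks_z02 t33 h213
          have h219 := ks_o2 t34 h198 h208
          have h220 := ks_z01 t36 h214
          have h221 := ks_z02 t36 h214
          have h222 := ks_z01 t37 h214
          have h223 := ks_z02 t37 h214
          have h224 := ks_o0 t8 h222 h215
          have h225 := ks_o0 t9 h220 h217
          have h226 := ks_o2 t24 h139 h222
          have h227 := ks_o2 t25 h139 h217
          have h228 := ks_o2 t26 h141 h220
          have h229 := ks_o2 t27 h141 h215
          exact ks_c01 t7 h224 h225
      · have h230 := ks_z01 t10 h143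
        have h231 := ks_z01 t16 h143
        have h232 := ks_z02 t16 h143
        have h233 := ks_z01 t17 h143
        have h234 := ks_z02 t17 h143
        have h235 := ks_o2 t12 h137 h231
        have h236 := ks_o1 t13 h138 h233
        have h237 := ks_z10 t18 h236
        have h238 := ks_z12 t18 h236
        have h239 := ks_z12 t19 h235
        have h240 := ks_z01 t34 h236
        have h241 := ks_z02 t34 h236
        have h242 := ks_o2 t35 h231 h240
        have h243 := ks_z01 t39 h235
        have h244 := ks_z02 t39 h235
        have h245 := ks_o1 t2 h1 h240
        have h246 := ks_o1 t3 h1 h243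
        have h247 := ks_o1 t11 h237 h136
        have h248 := ks_z01 t20 h247
        have h249 := ks_z02 t20 h247
        have h250 := ks_z01 t21 h247
        have h251 := ks_z02 t21 h247
        have h252 := ks_o2 t29 h248 h142
        have h253 := ks_o2 t30 h250 h140
        have h254 := ks_z01 t32 h245
        have h255 := ks_z02 t32 h245
        have h256 := ks_z01 t33 h245
        have h257 := ks_z02 t33 h245
        have h258 := ks_z01 t36 h246
        have h259 := ks_z02 t36 h246
        have h260 := ks_z01 t37 h246
        have h261 := ks_z02 t37 h246
        have h262 := ks_o2 t38 h233 h243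
        have h263 := ks_o0 t8 h260 h254
        have h264 := ks_o0 t9 h258 h256
        have h265 := ks_o2 t24 h139 h260
        have h266 := ks_o2 t25 h139 h256
        have h267 := ks_o2 t26 h141 h258
        have h268 := ks_o2 t27 h141 h254
        exact ks_c01 t7 h263 h264
  · have h269 := ks_z01 t0 h1
    have h270 := ks_z02 t0 h1
    have h271 := ks_z01 t1 h1
    have h272 := ks_z02 t1 h1
    have h273 := ks_z01 t2 h1
    have h274 := ks_z02 t2 h1
    have h275 := ks_z01 t3 h1
    have h276 := ks_z02 t3 h1
    rcases ks_br0 t10 with h277 | h277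
    · have h278 := ks_o1 t10 h277 h270
      have h279 := ks_z01 t22 h278
      have h280 := ks_z02 t22 h278
      have h281 := ks_z01 t23 h278
      have h282 := ks_z02 t23 h278
      have h283 := ks_o1 t14 h271 h281
      have h284 := ks_o1 t15 h279 h272
      have h285 := ks_z10 t20 h284
      have h286 := ks_z12 t20 h284
      have h287 := ks_z12 t21 h283
      have h288 := ks_z01 t29 h284
      have h289 := ks_z02 t29 h284
      have h290 := ks_z01 t30 h283
      have h291 := ks_z02 t30 h283
      have h292 := ks_o2 t31 h281 h288
      have h293 := ks_o1 t5 h269 h290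
      have h294 := ks_o1 t6 h269 h288
      have h295 := ks_o0 t11 h285 h270
      have h296 := ks_z01 t18 h295
      have h297 := ks_z02 t18 h295
      have h298 := ks_z01 t19 h295
      have h299 := ks_z02 t19 h295
      have h300 := ks_z01 t24 h293
      have h301 := ks_z02 t24 h293
      have h302 := ks_z01 t25 h293
      have h303 := ks_z02 t25 h293
      have h304 := ks_z01 t26 h294
      have h305 := ks_z02 t26 h294
      have h306 := ks_z01 t27 h294
      have h307 := ks_z02 t27 h294
      have h308 := ks_o2 t28 h279 h290
      have h309 := ks_o2 t32 h273 h306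
      have h310 := ks_o2 t33 h273 h302
      have h311 := ks_o2 t34 h296 h274
      have h312 := ks_o2 t36 h275 h304
      have h313 := ks_o2 t37 h275 h300
      have h314 := ks_o2 t39 h298 h276
      have h315 := ks_o0 t8 h300 h306
      have h316 := ks_o0 t9 h304 h302
      exact ks_c01 t7 h315 h316
    · have h317 := ks_z01 t10 h277
      have h318 := ks_z01 t16 h277
      have h319 := ks_z02 t16 h277
      have h320 := ks_z01 t17 h277
      have h321 := ks_z02 t17 h277
      have h322 := ks_o2 t35 h318 h274
      have h323 := ks_o2 t38 h320 h276
      rcases ks_br0 t15 with h324 | h324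
      · have h325 := ks_o1 t15 h324 h272
        have h326 := ks_z10 t20 h325
        have h327 := ks_z12 t20 h325
        have h328 := ks_o2 t22 h317 h324
        have h329 := ks_z01 t29 h325
        have h330 := ks_z02 t29 h325
        have h331 := ks_o1 t6 h269 h329
        have h332 := ks_o0 t11 h326 h270
        have h333 := ks_z01 t18 h332
        have h334 := ks_z02 t18 h332
        have h335 := ks_z01 t19 h332
        have h336 := ks_z02 t19 h332
        have h337 := ks_z01 t26 h331
        have h338 := ks_z02 t26 h331
        have h339 := ks_z01 t27 h331
        have h340 := ks_z02 t27 h331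
        have h341 := ks_o2 t32 h273 h339
        have h342 := ks_o2 t34 h333 h274
        have h343 := ks_o2 t36 h275 h337
        have h344 := ks_o2 t39 h335 h276
        have h345 := ks_o0 t12 h318 h335
        have h346 := ks_o0 t13 h333 h320
        exact ks_c12 t4 h345 h346
      · have h347 := ks_z01 t15 h324
        have h348 := ks_z12 t22 h324
        have h349 := ks_z01 t28 h324
        have h350 := ks_z02 t28 h324
        have h351 := ks_o1 t5 h269 h349
        have h352 := ks_z01 t24 h351
        have h353 := ks_z02 t24 h351
        have h354 := ks_z01 t25 h351
        have h355 := ks_z02 t25 h351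
        have h356 := ks_o2 t33 h273 h354
        have h357 := ks_o2 t37 h275 h352
        rcases ks_br1 t11 with h358 | h358
        · have h359 := ks_o0 t11 h358 h270
          have h360 := ks_z01 t18 h359
          have h361 := ks_z02 t18 h359
          have h362 := ks_z01 t19 h359
          have h363 := ks_z02 t19 h359
          have h364 := ks_o2 t20 h358 h347
          have h365 := ks_o2 t34 h360 h274
          have h366 := ks_o2 t39 h362 h276
          have h367 := ks_o0 t12 h318 h362
          have h368 := ks_o0 t13 h360 h320
          exact ks_c12 t4 h367 h368
        · have h369 := ks_z10 t11 h358
          have h370 := ks_z02 t20 h358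
          have h371 := ks_z01 t21 h358
          have h372 := ks_z02 t21 h358
          have h373 := ks_o2 t30 h371 h349
          have h374 := ks_o2 t14 h271 h371
          have h375 := ks_z12 t23 h374
          have h376 := ks_z01 t31 h374
          have h377 := ks_z02 t31 h374
          have h378 := ks_o1 t6 h269 h376
          have h379 := ks_z01 t26 h378
          have h380 := ks_z02 t26 h378
          have h381 := ks_z01 t27 h378
          have h382 := ks_z02 t27 h378
          have h383 := ks_o2 t29 h347 h376
          have h384 := ks_o2 t32 h273 h381
          have h385 := ks_o2 t36 h275 h379
          have h386 := ks_o0 t8 h352 h381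
          have h387 := ks_o0 t9 h379 h354
          exact ks_c01 t7 h386 h387

/-- The Kochen–Specker theorem: for `d ≥ 3` there is no `{0,1}`-valued assignment on the
unit vectors of `ℝ^d` that is constant on rays (vectors spanning the same one-dimensional
subspace) and selects exactly one vector in every orthonormal basis. -/
theorem kochen_specker (d : ℕ) (hd : 3 ≤ d) :
    ¬ ∃ f : EuclideanSpace ℝ (Fin d) → ℕ,
      (∀ x, ‖x‖ = 1 → f x = 0 ∨ f x = 1) ∧
      (∀ x y : EuclideanSpace ℝ (Fin d),
        ‖x‖ = 1 → ‖y‖ = 1 → (∃ c : ℝ, y = c • x) → f x = f y) ∧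
      (∀ b : OrthonormalBasis (Fin d) ℝ (EuclideanSpace ℝ (Fin d)),
        ∑ i, f (b i) = 1) := by
  classical
  rintro ⟨f, -, -, hbasis⟩
  have hsum := hbasis (EuclideanSpace.basisFun (Fin d) ℝ)
  simp only [EuclideanSpace.basisFun_apply] at hsum
  have hex : ∃ i : Fin d, f (EuclideanSpace.single i (1:ℝ)) ≠ 0 := by
    by_contra h
    push_neg at h
    rw [Finset.sum_eq_zero (fun i _ => h i)] at hsum
    omega
  obtain ⟨i1, hi1⟩ := hex
  have hzero : ∀ j : Fin d, j ≠ i1 → f (EuclideanSpace.single j (1:ℝ)) = 0 := by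
    intro j hj
    have hsub : ({i1, j} : Finset (Fin d)) ⊆ Finset.univ := Finset.subset_univ _
    have hle := Finset.sum_le_sum_of_subset (f := fun i => f (EuclideanSpace.single i (1:ℝ))) hsub
    rw [Finset.sum_insert (by simpa using hj.symm), Finset.sum_singleton, hsum] at hle
    omega
  have h3 : (3:ℕ) ≤ d := hd
  let j0 : Fin d := ⟨0, by omega⟩
  let j1 : Fin d := ⟨1, by omega⟩
  let j2 : Fin d := ⟨2, by omega⟩
  have h01 : j0 ≠ j1 := by simp [j0, j1, Fin.ext_iff]
  have h02 : j0 ≠ j2 := by simp [j0, j2, Fin.ext_iff]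
  have h12 : j1 ≠ j2 := by simp [j1, j2, Fin.ext_iff]
  by_cases hA : i1 = j0
  · exact ks_core f hbasis j0 j1 j2 h01 h02 h12
      (fun i hi0 _ _ => hzero i (by rw [hA]; exact hi0))
  by_cases hB : i1 = j1
  · exact ks_core f hbasis j1 j0 j2 h01.symm h12 h02
      (fun i hi1' _ _ => hzero i (by rw [hB]; exact hi1'))
  · exact ks_core f hbasis i1 j0 j1 (fun h => hA h) (fun h => hB h) h01
      (fun i hi _ _ => hzero i hi)
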